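/- The Cartan–Serre map CS : C(□^n) → C(Δ^n) is a quasi-isomorphism: the induced map on homology is an isomorphism in every degree. -/

import Mathlib

/-- The three cells of the interval: `[0]`, `[0,1]` (written `mid`), and `[1]`. -/
inductive CubeF : Type
  | zero : CubeF
  | mid : CubeF
  | one : CubeF
  deriving DecidableEq

namespace CartanSerre

/-- Basis elements of the cubical chain complex `C(□^n)`: tensors `x_1 ⊗ ⋯ ⊗ x_n`. -/
abbrev CubeB (n : ℕ) := Fin n → CubeF
/-- The cubical chain complex `C(□^n)` (as the free ℤ-module on its basis). -/
abbrev CubeChain (n : ℕ) := CubeB n →₀ ℤ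
/-- `C(□^n) ⊗ C(□^n)`, modeled as the free ℤ-module on pairs of basis elements. -/
abbrev CubeChain2 (n : ℕ) := (CubeB n × CubeB n) →₀ ℤ
/-- Basis elements of `C(Δ^n)`: strictly increasing tuples `[v_0, …, v_m]` with
`v_i ∈ {0,…,n}`, i.e. nonempty finite subsets of `Fin (n+1)` (`∅` is not used). -/
abbrev SimpB (n : ℕ) := Finset (Fin (n + 1))
/-- The normalized simplicial chain complex `C(Δ^n)`. -/
abbrev SimpChain (n : ℕ) := SimpB n →₀ ℤ
/-- `C(Δ^n) ⊗ C(Δ^n)`. -/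
abbrev SimpChain2 (n : ℕ) := (SimpB n × SimpB n) →₀ ℤ

/-- Degree of a cubical basis element: the number of factors equal to `[0,1]`. -/
def cubeDeg {n : ℕ} (x : CubeB n) : ℕ :=
  (Finset.univ.filter fun i => x i = CubeF.mid).card

/-- Degree of a simplicial basis element `[v_0, …, v_m]`, namely `m`. -/
def simpDeg {n : ℕ} (s : SimpB n) : ℕ := s.card - 1

/-- The cubical boundary on a basis element. -/
noncomputable def cubeBdFun (n : ℕ) (x : CubeB n) : CubeChain n :=
  ∑ i ∈ Finset.univ.filter (fun i => x i = CubeF.mid),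
    ((-1 : ℤ) ^ (Finset.univ.filter fun j => j < i ∧ x j = CubeF.mid).card) •
      (Finsupp.single (Function.update x i CubeF.one) 1 -
        Finsupp.single (Function.update x i CubeF.zero) 1)

/-- The cubical boundary `∂ : C(□^n) → C(□^n)`. -/
noncomputable def cubeBd (n : ℕ) : CubeChain n →ₗ[ℤ] CubeChain n :=
  Finsupp.lift (CubeChain n) ℤ (CubeB n) (cubeBdFun n)

/-- The (normalized) simplicial boundary on a basis element. -/
noncomputable def simpBdFun (n : ℕ) (s : SimpB n) : SimpChain n :=
  if 2 ≤ s.card then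
    ∑ v ∈ s, ((-1 : ℤ) ^ (s.filter fun w => w < v).card) • Finsupp.single (s.erase v) 1
  else 0

/-- The simplicial boundary `∂ : C(Δ^n) → C(Δ^n)`. -/
noncomputable def simpBd (n : ℕ) : SimpChain n →ₗ[ℤ] SimpChain n :=
  Finsupp.lift (SimpChain n) ℤ (SimpB n) (simpBdFun n)

/-- `p(x) - 1` (0-indexed): the first position of a factor `[0]`, or `n` if there is none. -/
def pIdx {n : ℕ} (x : CubeB n) : Fin (n + 1) :=
  ⟨(List.ofFn x).findIdx (fun c => decide (c = CubeF.zero)), by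
    have h : (List.ofFn x).findIdx (fun c => decide (c = CubeF.zero)) ≤ (List.ofFn x).length :=
      List.findIdx_le_length
    simp only [List.length_ofFn] at h
    omega⟩

/-- The vertex set `[q_1 - 1, …, q_m - 1, p(x) - 1]` of the image of `x` under `CS`. -/
def csSet {n : ℕ} (x : CubeB n) : SimpB n :=
  insert (pIdx x) ((Finset.univ.filter fun i => x i = CubeF.mid).image Fin.castSucc)

/-- The Cartan–Serre map `CS` on a cubical basis element. -/
noncomputable def csFun (n : ℕ) (x : CubeB n) : SimpChain n :=
  if ∃ i j : Fin n, i < j ∧ x i = CubeF.zero ∧ x j = CubeF.mid then 0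
  else Finsupp.single (csSet x) 1

/-- The Cartan–Serre chain map `CS : C(□^n) → C(Δ^n)`. -/
noncomputable def csL (n : ℕ) : CubeChain n →ₗ[ℤ] SimpChain n :=
  Finsupp.lift (SimpChain n) ℤ (CubeB n) (csFun n)

/-- The cubical counit `ε_□ : C(□^n) → ℤ`. -/
noncomputable def cubeEps (n : ℕ) : CubeChain n →ₗ[ℤ] ℤ :=
  Finsupp.lift ℤ ℤ (CubeB n) (fun x => if cubeDeg x = 0 then (1 : ℤ) else 0)

/-- The simplicial counit `ε_Δ : C(Δ^n) → ℤ`. -/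
noncomputable def simpEps (n : ℕ) : SimpChain n →ₗ[ℤ] ℤ :=
  Finsupp.lift ℤ ℤ (SimpB n) (fun s => if s.card = 1 then (1 : ℤ) else 0)

/-- Tensor product of two elements of free modules, in the product-basis model. -/
noncomputable def tensorF {α β : Type*} (a : α →₀ ℤ) (b : β →₀ ℤ) : (α × β) →₀ ℤ :=
  a.sum fun i r => b.sum fun j s => Finsupp.single (i, j) (r * s)

/-- Left factor of the Serre diagonal summand indexed by `S`:
factors in `S` contribute `[0,1]`, the other `[0,1]`-factors contribute `[0]`. -/
def serreL {n : ℕ} (x : CubeB n) (S : Finset (Fin n)) : CubeB n := fun i =>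
  if x i = CubeF.mid then (if i ∈ S then CubeF.mid else CubeF.zero) else x i

/-- Right factor of the Serre diagonal summand indexed by `S`. -/
def serreR {n : ℕ} (x : CubeB n) (S : Finset (Fin n)) : CubeB n := fun i =>
  if x i = CubeF.mid then (if i ∈ S then CubeF.one else CubeF.mid) else x i

/-- Koszul sign exponent of the Serre diagonal summand indexed by `S`. -/
def serreSign {n : ℕ} (x : CubeB n) (S : Finset (Fin n)) : ℕ :=
  ((Finset.univ : Finset (Fin n × Fin n)).filter fun p =>
    p.1 < p.2 ∧ x p.1 = CubeF.mid ∧ p.1 ∉ S ∧ p.2 ∈ S).card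

/-- The Serre diagonal `Δ_□` on a basis element: the tensor product (with Koszul
signs) of `Δ[0] = [0]⊗[0]`, `Δ[1] = [1]⊗[1]`, `Δ[0,1] = [0]⊗[0,1] + [0,1]⊗[1]`. -/
noncomputable def serreDiagFun (n : ℕ) (x : CubeB n) : CubeChain2 n :=
  ∑ S ∈ (Finset.univ.filter fun i => x i = CubeF.mid).powerset,
    ((-1 : ℤ) ^ serreSign x S) • Finsupp.single (serreL x S, serreR x S) 1

/-- The Serre diagonal `Δ_□ : C(□^n) → C(□^n) ⊗ C(□^n)`. -/
noncomputable def serreDiag (n : ℕ) : CubeChain n →ₗ[ℤ] CubeChain2 n :=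
  Finsupp.lift (CubeChain2 n) ℤ (CubeB n) (serreDiagFun n)

/-- The Alexander–Whitney coproduct on a basis element:
`Δ_AW [v_0,…,v_m] = Σ_i [v_0,…,v_i] ⊗ [v_i,…,v_m]`. -/
noncomputable def awFun (n : ℕ) (s : SimpB n) : SimpChain2 n :=
  ∑ v ∈ s, Finsupp.single (s.filter fun w => w ≤ v, s.filter fun w => v ≤ w) 1

/-- The Alexander–Whitney coproduct `Δ_AW : C(Δ^n) → C(Δ^n) ⊗ C(Δ^n)`. -/
noncomputable def awDiag (n : ℕ) : SimpChain n →ₗ[ℤ] SimpChain2 n :=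
  Finsupp.lift (SimpChain2 n) ℤ (SimpB n) (awFun n)

/-- `CS ⊗ CS : C(□^n) ⊗ C(□^n) → C(Δ^n) ⊗ C(Δ^n)` (no Koszul signs: `CS` has degree 0). -/
noncomputable def cs2L (n : ℕ) : CubeChain2 n →ₗ[ℤ] SimpChain2 n :=
  Finsupp.lift (SimpChain2 n) ℤ (CubeB n × CubeB n)
    (fun p => tensorF (csFun n p.1) (csFun n p.2))

/-- The join on single cube factors: `[0] ∗ [1] = [0,1]`, `[1] ∗ [0] = -[0,1]`,
all other joins of basis elements vanish (the outcome factor being `[0,1]`). -/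
def joinF : CubeF → CubeF → ℤ
  | CubeF.zero, CubeF.one => 1
  | CubeF.one, CubeF.zero => -1
  | _, _ => 0

/-- The cubical join `∗` on basis elements. -/
noncomputable def cubeJoinFun (n : ℕ) (x y : CubeB n) : CubeChain n :=
  ((-1 : ℤ) ^ cubeDeg x) •
    ∑ l : Fin n,
      ((if (∀ j, j < l → y j ≠ CubeF.mid) ∧ (∀ j, l < j → x j ≠ CubeF.mid) then (1 : ℤ) else 0) *
          joinF (x l) (y l)) •
        Finsupp.single (fun j => if j < l then x j else if j = l then CubeF.mid else y j) 1

/-- The cubical join, extended bilinearly to chains. -/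
noncomputable def cubeJoinC (n : ℕ) (a b : CubeChain n) : CubeChain n :=
  a.sum fun x r => b.sum fun y s => (r * s) • cubeJoinFun n x y

/-- The simplicial join `∗` on basis elements: `0` if the vertex sets meet, and
otherwise `(-1)^{p + |σ|}` times the union, `|σ|` counting the inversions. -/
noncomputable def simpJoinFun (n : ℕ) (s t : SimpB n) : SimpChain n :=
  if s ∩ t = ∅ ∧ s.Nonempty ∧ t.Nonempty then
    ((-1 : ℤ) ^ ((s.card - 1) + ((s ×ˢ t).filter fun p => p.2 < p.1).card)) •
      Finsupp.single (s ∪ t) 1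
  else 0

/-- The simplicial join, extended bilinearly to chains. -/
noncomputable def simpJoinC (n : ℕ) (a b : SimpChain n) : SimpChain n :=
  a.sum fun s r => b.sum fun t u => (r * u) • simpJoinFun n s t

/-- The linear order `[0] < [0,1] < [1]` on interval cells, via `0 < 1 < 2`. -/
def cellVal : CubeF → ℕ
  | CubeF.zero => 0
  | CubeF.mid => 1
  | CubeF.one => 2

/-- The componentwise partial order on cubical basis elements,
with `[0] < [0,1] < [1]` on each factor. -/
def cubeLe {n : ℕ} (x y : CubeB n) : Prop := ∀ i, cellVal (x i) ≤ cellVal (y i)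

/-- Left-parenthesized iterated join of a nonempty list (the base case `[]` is junk). -/
noncomputable def foldJoin {C : Type*} (join : C → C → C) (z : C) : List C → C
  | [] => z
  | a :: l => l.foldl join a

/-- Left-parenthesized iterated cubical join `∗^{k}` of `k+1` basis elements. -/
noncomputable def iterCubeJoin (n k : ℕ) (f : Fin (k + 1) → CubeB n) : CubeChain n :=
  foldJoin (cubeJoinC n) 0 (List.ofFn fun i : Fin (k + 1) => (Finsupp.single (f i) 1 : CubeChain n))

/-- Left-parenthesized iterated simplicial join `∗^{k}` of `k+1` chains. -/
noncomputable def iterSimpJoin (n k : ℕ) (g : Fin (k + 1) → SimpChain n) : SimpChain n :=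
  foldJoin (simpJoinC n) 0 (List.ofFn g)

/-- The iterated Serre diagonal `Δ_□^k` on a basis element, with `k+1` output factors
(iterated on the last factor; this is unambiguous by coassociativity, and no Koszul
signs appear since `Δ_□` has degree `0`). -/
noncomputable def serreIterFun (n : ℕ) : (k : ℕ) → CubeB n → ((Fin (k + 1) → CubeB n) →₀ ℤ)
  | 0, x => Finsupp.single (fun _ => x) 1
  | k + 1, x =>
    (serreIterFun n k x).sum fun f c =>
      (serreDiagFun n (f (Fin.last k))).sum fun p d =>
        Finsupp.single
          (fun i : Fin (k + 2) =>
            if h : (i : ℕ) < k then f ⟨(i : ℕ), by omega⟩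
            else if (i : ℕ) = k then p.1 else p.2) (c * d)

/-- The iterated Serre diagonal `Δ_□^k : C(□^n) → C(□^n)^{⊗(k+1)}`. -/
noncomputable def serreIter (n k : ℕ) : CubeChain n →ₗ[ℤ] ((Fin (k + 1) → CubeB n) →₀ ℤ) :=
  Finsupp.lift _ ℤ (CubeB n) (serreIterFun n k)

/-- The iterated Alexander–Whitney coproduct `Δ_AW^k` on a basis element. -/
noncomputable def awIterFun (n : ℕ) : (k : ℕ) → SimpB n → ((Fin (k + 1) → SimpB n) →₀ ℤ)
  | 0, s => Finsupp.single (fun _ => s) 1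
  | k + 1, s =>
    (awIterFun n k s).sum fun f c =>
      (awFun n (f (Fin.last k))).sum fun p d =>
        Finsupp.single
          (fun i : Fin (k + 2) =>
            if h : (i : ℕ) < k then f ⟨(i : ℕ), by omega⟩
            else if (i : ℕ) = k then p.1 else p.2) (c * d)

/-- The iterated Alexander–Whitney coproduct `Δ_AW^k : C(Δ^n) → C(Δ^n)^{⊗(k+1)}`. -/
noncomputable def awIter (n k : ℕ) : SimpChain n →ₗ[ℤ] ((Fin (k + 1) → SimpB n) →₀ ℤ) :=
  Finsupp.lift _ ℤ (SimpB n) (awIterFun n k)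

/-- The action of a permutation `τ` on a `k`-fold tensor of basis elements,
with the Koszul sign determined by the degrees of the factors it transposes. -/
noncomputable def koszulPermFun {α : Type*} (deg : α → ℕ) {k : ℕ} (τ : Equiv.Perm (Fin k))
    (f : Fin k → α) : (Fin k → α) →₀ ℤ :=
  ((-1 : ℤ) ^ ∑ p ∈ (Finset.univ : Finset (Fin k × Fin k)).filter
      (fun p => p.1 < p.2 ∧ τ p.2 < τ p.1), deg (f (τ p.1)) * deg (f (τ p.2))) •
    Finsupp.single (fun i => f (τ i)) 1

/-- The action of a permutation on `k`-fold tensors, with Koszul signs. -/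
noncomputable def koszulPerm {α : Type*} (deg : α → ℕ) {k : ℕ} (τ : Equiv.Perm (Fin k)) :
    ((Fin k → α) →₀ ℤ) →ₗ[ℤ] ((Fin k → α) →₀ ℤ) :=
  Finsupp.lift _ ℤ (Fin k → α) (koszulPermFun deg τ)

/-- Tensor product of an `r`-tuple of elements of a free module, product-basis model. -/
noncomputable def tensorPi {r : ℕ} {α : Type*} [DecidableEq α] (c : Fin r → (α →₀ ℤ)) :
    (Fin r → α) →₀ ℤ :=
  ∑ g ∈ Fintype.piFinset (fun i => (c i).support), Finsupp.single g (∏ i, (c i) (g i))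

/-- `CS^{⊗ r} : C(□^n)^{⊗ r} → C(Δ^n)^{⊗ r}` (no Koszul signs: `CS` has degree 0). -/
noncomputable def csTensor (n r : ℕ) : ((Fin r → CubeB n) →₀ ℤ) →ₗ[ℤ] ((Fin r → SimpB n) →₀ ℤ) :=
  Finsupp.lift _ ℤ (Fin r → CubeB n) (fun f => tensorPi fun i => csFun n (f i))

/-- The index in `Fin (k_1 + ⋯ + k_r)` of the `j`-th tensor factor of the `i`-th block. -/
def blockIdx {r : ℕ} (K : Fin r → ℕ) {m : ℕ} (hm : m + 1 = ∑ i, K i) (i : Fin r)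
    (j : Fin (K i)) : Fin (m + 1) :=
  ⟨(∑ j' ∈ Finset.univ.filter (fun j' => j' < i), K j') + (j : ℕ), by
    have h2 : (j : ℕ) < K i := j.isLt
    have h3 : K i + ∑ j' ∈ Finset.univ.filter (fun j' => j' < i), K j' ≤ ∑ i', K i' := by
      rw [← Finset.sum_insert (a := i) (s := Finset.univ.filter (fun j' => j' < i)) (by simp)]
      exact Finset.sum_le_sum_of_subset (Finset.subset_univ _)
    omega⟩

/-- A `(k_1, …, k_r)`-shuffle: a permutation increasing on each block. -/
def IsShuffle {r : ℕ} (K : Fin r → ℕ) {m : ℕ} (hm : m + 1 = ∑ i, K i)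
    (σ : Equiv.Perm (Fin (m + 1))) : Prop :=
  ∀ (i : Fin r) (j j' : Fin (K i)), j < j' → σ (blockIdx K hm i j) < σ (blockIdx K hm i j')

/-- Total degree of the `i`-th block of a `k`-fold cubical tensor. -/
def cubeBlockDeg {n r : ℕ} (K : Fin r → ℕ) {m : ℕ} (hm : m + 1 = ∑ i, K i)
    (f : Fin (m + 1) → CubeB n) (i : Fin r) : ℕ :=
  ∑ j : Fin (K i), cubeDeg (f (blockIdx K hm i j))

/-- Total degree of the `i`-th block of a `k`-fold simplicial tensor. -/
def simpBlockDeg {n r : ℕ} (K : Fin r → ℕ) {m : ℕ} (hm : m + 1 = ∑ i, K i)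
    (f : Fin (m + 1) → SimpB n) (i : Fin r) : ℕ :=
  ∑ j : Fin (K i), simpDeg (f (blockIdx K hm i j))

/-- `∗^{k_1 - 1} ⊗ ⋯ ⊗ ∗^{k_r - 1}` on a cubical `k`-fold tensor basis element, with
the Koszul sign for applying the degree-`(k_i - 1)` maps across the earlier blocks. -/
noncomputable def cubeBlockJoinFun (n r : ℕ) (K : Fin r → ℕ) {m : ℕ} (hm : m + 1 = ∑ i, K i)
    (f : Fin (m + 1) → CubeB n) : (Fin r → CubeB n) →₀ ℤ :=
  ((-1 : ℤ) ^ ∑ p ∈ (Finset.univ : Finset (Fin r × Fin r)).filter (fun p => p.1 < p.2),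
      (K p.2 - 1) * cubeBlockDeg K hm f p.1) •
    tensorPi (fun i : Fin r =>
      foldJoin (cubeJoinC n) 0
        (List.ofFn fun j : Fin (K i) => (Finsupp.single (f (blockIdx K hm i j)) 1 : CubeChain n)))

/-- `∗^{k_1 - 1} ⊗ ⋯ ⊗ ∗^{k_r - 1} : C(□^n)^{⊗ k} → C(□^n)^{⊗ r}`. -/
noncomputable def cubeBlockJoin (n r : ℕ) (K : Fin r → ℕ) {m : ℕ} (hm : m + 1 = ∑ i, K i) :
    ((Fin (m + 1) → CubeB n) →₀ ℤ) →ₗ[ℤ] ((Fin r → CubeB n) →₀ ℤ) :=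
  Finsupp.lift _ ℤ (Fin (m + 1) → CubeB n) (cubeBlockJoinFun n r K hm)

/-- `∗^{k_1 - 1} ⊗ ⋯ ⊗ ∗^{k_r - 1}` on a simplicial `k`-fold tensor basis element. -/
noncomputable def simpBlockJoinFun (n r : ℕ) (K : Fin r → ℕ) {m : ℕ} (hm : m + 1 = ∑ i, K i)
    (f : Fin (m + 1) → SimpB n) : (Fin r → SimpB n) →₀ ℤ :=
  ((-1 : ℤ) ^ ∑ p ∈ (Finset.univ : Finset (Fin r × Fin r)).filter (fun p => p.1 < p.2),
      (K p.2 - 1) * simpBlockDeg K hm f p.1) •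
    tensorPi (fun i : Fin r =>
      foldJoin (simpJoinC n) 0
        (List.ofFn fun j : Fin (K i) => (Finsupp.single (f (blockIdx K hm i j)) 1 : SimpChain n)))

/-- `∗^{k_1 - 1} ⊗ ⋯ ⊗ ∗^{k_r - 1} : C(Δ^n)^{⊗ k} → C(Δ^n)^{⊗ r}`. -/
noncomputable def simpBlockJoin (n r : ℕ) (K : Fin r → ℕ) {m : ℕ} (hm : m + 1 = ∑ i, K i) :
    ((Fin (m + 1) → SimpB n) →₀ ℤ) →ₗ[ℤ] ((Fin r → SimpB n) →₀ ℤ) :=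
  Finsupp.lift _ ℤ (Fin (m + 1) → SimpB n) (simpBlockJoinFun n r K hm)

/-- A chain is homogeneous of degree `m` if its support is contained in degree-`m` basis elements. -/
def cubeHomog (n m : ℕ) (c : CubeChain n) : Prop := ∀ x ∈ c.support, cubeDeg x = m

/-- A simplicial chain is homogeneous of degree `m` if every basis element in its
support is a strictly increasing tuple `[v_0, …, v_m]`, i.e. has `m+1` vertices. -/
def simpHomog (n m : ℕ) (c : SimpChain n) : Prop := ∀ s ∈ c.support, s.card = m + 1

end CartanSerre
namespace CartanSerre

open Finsupp CubeF

variable {n : ℕ}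

lemma lift_single {M : Type*} [AddCommMonoid M] [Module ℤ M] {α : Type*}
    (f : α → M) (x : α) (r : ℤ) :
    Finsupp.lift M ℤ α f (Finsupp.single x r) = r • f x := by
  rw [Finsupp.lift_apply, Finsupp.sum_single_index]
  simp

/-- generic first-index -/
def fIdx (p : CubeF → Bool) (x : CubeB n) : Fin (n + 1) :=
  ⟨(List.ofFn x).findIdx p, by
    have h := List.findIdx_le_length (p := p) (xs := List.ofFn x)
    simp only [List.length_ofFn] at h; omega⟩

lemma pIdx_eq_fIdx (x : CubeB n) : pIdx x = fIdx (fun c => decide (c = CubeF.zero)) x := rfl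

lemma fIdx_lt_imp (p : CubeF → Bool) (x : CubeB n) (j : Fin n)
    (h : (j : ℕ) < (fIdx p x : ℕ)) : ¬ p (x j) := by
  intro hp
  have hlen : (j : ℕ) < (List.ofFn x).length := by simp
  have := List.not_of_lt_findIdx (p := p) (xs := List.ofFn x) (i := (j : ℕ)) h
  rw [List.getElem_ofFn] at this
  simp only [Fin.eta] at this
  rw [this] at hp; exact Bool.false_ne_true hp

lemma fIdx_self (p : CubeF → Bool) (x : CubeB n) (h : (fIdx p x : ℕ) < n) :
    p (x ⟨fIdx p x, h⟩) := by
  have hlen : ((fIdx p x : ℕ)) < (List.ofFn x).length := by simp [h]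
  have := List.findIdx_getElem (p := p) (xs := List.ofFn x) (w := hlen)
  rw [← List.getElem_ofFn (f := x) hlen]
  exact this

lemma fIdx_eq (p : CubeF → Bool) (x : CubeB n) (k : Fin (n + 1))
    (h1 : ∀ j : Fin n, (j : ℕ) < (k : ℕ) → ¬ p (x j))
    (h2 : ∀ h : (k : ℕ) < n, p (x ⟨k, h⟩)) : fIdx p x = k := by
  rcases Nat.lt_trichotomy (fIdx p x : ℕ) (k : ℕ) with h | h | h
  · exfalso
    have hn : (fIdx p x : ℕ) < n := lt_of_lt_of_le h (Nat.lt_succ_iff.mp k.isLt)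
    exact h1 ⟨fIdx p x, hn⟩ h (fIdx_self p x hn)
  · exact Fin.ext h
  · exfalso
    have hn : (k : ℕ) < n := lt_of_lt_of_le h (Nat.lt_succ_iff.mp (fIdx p x).isLt)
    exact fIdx_lt_imp p x ⟨k, hn⟩ h (h2 hn)

lemma fIdx_le (p : CubeF → Bool) (x : CubeB n) (j : Fin n) (h : p (x j)) :
    (fIdx p x : ℕ) ≤ (j : ℕ) := by
  by_contra hc
  exact fIdx_lt_imp p x j (by omega) h

end CartanSerre
namespace CartanSerre

open Finsupp CubeF Function

variable {n : ℕ}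

/-- The set of `mid` positions. -/
def mids (x : CubeB n) : Finset (Fin n) := Finset.univ.filter fun i => x i = CubeF.mid

lemma mem_mids {x : CubeB n} {i : Fin n} : i ∈ mids x ↔ x i = CubeF.mid := by
  simp [mids]

lemma cubeDeg_eq_card (x : CubeB n) : cubeDeg x = (mids x).card := rfl

/-- First `mid` position (or `n`). -/
def mIdx (x : CubeB n) : Fin (n + 1) := fIdx (fun c => decide (c = CubeF.mid)) x

lemma ne_zero_of_lt_pIdx {x : CubeB n} {j : Fin n} (h : (j : ℕ) < (pIdx x : ℕ)) :
    x j ≠ CubeF.zero := by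
  have := fIdx_lt_imp (fun c => decide (c = CubeF.zero)) x j (by rw [pIdx_eq_fIdx] at h; exact h)
  simpa using this

lemma pIdx_self {x : CubeB n} (h : ((pIdx x : ℕ)) < n) : x ⟨pIdx x, h⟩ = CubeF.zero := by
  have := fIdx_self (fun c => decide (c = CubeF.zero)) x (by rw [pIdx_eq_fIdx] at h; exact h)
  exact of_decide_eq_true this

lemma pIdx_eq {x : CubeB n} {k : Fin (n + 1)}
    (h1 : ∀ j : Fin n, (j : ℕ) < (k : ℕ) → x j ≠ CubeF.zero)
    (h2 : ∀ h : (k : ℕ) < n, x ⟨k, h⟩ = CubeF.zero) : pIdx x = k := by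
  rw [pIdx_eq_fIdx]
  exact fIdx_eq _ x k (fun j hj => by simpa using h1 j hj) (fun h => by simpa using h2 h)

lemma pIdx_le {x : CubeB n} {j : Fin n} (h : x j = CubeF.zero) : (pIdx x : ℕ) ≤ (j : ℕ) := by
  by_contra hc
  exact ne_zero_of_lt_pIdx (by omega) h

lemma ne_mid_of_lt_mIdx {x : CubeB n} {j : Fin n} (h : (j : ℕ) < (mIdx x : ℕ)) :
    x j ≠ CubeF.mid := by
  have := fIdx_lt_imp (fun c => decide (c = CubeF.mid)) x j h
  simpa using this

lemma mIdx_self {x : CubeB n} (h : ((mIdx x : ℕ)) < n) : x ⟨mIdx x, h⟩ = CubeF.mid := by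
  have := fIdx_self (fun c => decide (c = CubeF.mid)) x h
  exact of_decide_eq_true this

lemma mIdx_eq {x : CubeB n} {k : Fin (n + 1)}
    (h1 : ∀ j : Fin n, (j : ℕ) < (k : ℕ) → x j ≠ CubeF.mid)
    (h2 : ∀ h : (k : ℕ) < n, x ⟨k, h⟩ = CubeF.mid) : mIdx x = k :=
  fIdx_eq _ x k (fun j hj => by simpa using h1 j hj) (fun h => by simpa using h2 h)

lemma mIdx_le {x : CubeB n} {j : Fin n} (h : x j = CubeF.mid) : (mIdx x : ℕ) ≤ (j : ℕ) := by
  by_contra hc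
  exact ne_mid_of_lt_mIdx (by omega) h

/-- Degeneracy condition for the Cartan–Serre map. -/
def Degen {n : ℕ} (x : CubeB n) : Prop :=
  ∃ i j : Fin n, i < j ∧ x i = CubeF.zero ∧ x j = CubeF.mid

lemma csFun_eq_of_not_degen {x : CubeB n} (h : ¬ Degen x) :
    csFun n x = Finsupp.single (csSet x) 1 := by
  rw [csFun, if_neg (by exact h)]

lemma csFun_eq_of_degen {x : CubeB n} (h : Degen x) : csFun n x = 0 := by
  rw [csFun, if_pos (by exact h)]

lemma mids_update {x : CubeB n} {i : Fin n} {c : CubeF} (hc : c ≠ CubeF.mid) :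
    mids (Function.update x i c) = (mids x).erase i := by
  ext j
  by_cases h : j = i
  · subst h; simp [mem_mids, Function.update_self, hc]
  · simp [mem_mids, Function.update_of_ne h, h]

lemma mid_lt_pIdx {x : CubeB n} (hnd : ¬ Degen x) {q : Fin n} (hq : x q = CubeF.mid) :
    (q : ℕ) < (pIdx x : ℕ) := by
  by_contra hc
  push_neg at hc
  have hn : ((pIdx x : ℕ)) < n := lt_of_le_of_lt hc q.isLt
  have hz := pIdx_self hn
  have hne : (⟨pIdx x, hn⟩ : Fin n) ≠ q := by
    intro he; rw [he, hq] at hz; exact CubeF.noConfusion hz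
  have hlt : (⟨pIdx x, hn⟩ : Fin n) < q := lt_of_le_of_ne (by exact hc) hne
  exact hnd ⟨⟨pIdx x, hn⟩, q, hlt, hz, hq⟩

end CartanSerre
namespace CartanSerre

open Finsupp CubeF Function

variable {n : ℕ}

lemma csSet_eq (x : CubeB n) : csSet x = insert (pIdx x) ((mids x).image Fin.castSucc) := rfl

lemma pIdx_update_of_ne_zero {x : CubeB n} {i : Fin n} {c : CubeF}
    (hi : x i ≠ CubeF.zero) (hc : c ≠ CubeF.zero) :
    pIdx (Function.update x i c) = pIdx x := by
  apply pIdx_eq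
  · intro j hj
    by_cases h : j = i
    · subst h; rw [Function.update_self]; exact hc
    · rw [Function.update_of_ne h]; exact ne_zero_of_lt_pIdx hj
  · intro h
    have hne : (⟨pIdx x, h⟩ : Fin n) ≠ i := by
      intro he; rw [← he] at hi; exact hi (pIdx_self h)
    rw [Function.update_of_ne hne]; exact pIdx_self h

lemma pIdx_update_of_lt {x : CubeB n} {i : Fin n} (h : (pIdx x : ℕ) < (i : ℕ)) (c : CubeF) :
    pIdx (Function.update x i c) = pIdx x := by
  apply pIdx_eq
  · intro j hj
    have hne : j ≠ i := by intro he; subst he; omega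
    rw [Function.update_of_ne hne]; exact ne_zero_of_lt_pIdx hj
  · intro hn
    have hne : (⟨pIdx x, hn⟩ : Fin n) ≠ i := by
      intro he; rw [Fin.ext_iff] at he; simp at he; omega
    rw [Function.update_of_ne hne]; exact pIdx_self hn

lemma pIdx_update_zero {x : CubeB n} {i : Fin n}
    (h1 : ∀ j : Fin n, (j : ℕ) < (i : ℕ) → x j ≠ CubeF.zero) :
    pIdx (Function.update x i CubeF.zero) = i.castSucc := by
  apply pIdx_eq
  · intro j hj
    simp only [Fin.coe_castSucc] at hj
    have hne : j ≠ i := by intro he; subst he; omega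
    rw [Function.update_of_ne hne]; exact h1 j hj
  · intro h
    have : (⟨(i.castSucc : ℕ), h⟩ : Fin n) = i := by
      apply Fin.ext; simp
    rw [this, Function.update_self]

lemma pIdx_not_mem_image {x : CubeB n} (hnd : ¬ Degen x) :
    pIdx x ∉ (mids x).image Fin.castSucc := by
  intro hmem
  rcases Finset.mem_image.mp hmem with ⟨q, hq, he⟩
  have := mid_lt_pIdx hnd (mem_mids.mp hq)
  rw [← he] at this; simp at this

lemma csSet_card {x : CubeB n} (hnd : ¬ Degen x) : (csSet x).card = cubeDeg x + 1 := by
  rw [csSet_eq, Finset.card_insert_of_notMem (pIdx_not_mem_image hnd),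
    Finset.card_image_of_injective _ (Fin.castSucc_injective n), cubeDeg_eq_card]

lemma not_degen_update_one {x : CubeB n} (hnd : ¬ Degen x) {q : Fin n} (hq : x q = CubeF.mid) :
    ¬ Degen (Function.update x q CubeF.one) := by
  rintro ⟨i, j, hij, hi, hj⟩
  have hjq : j ≠ q := by intro he; subst he; rw [Function.update_self] at hj; exact CubeF.noConfusion hj
  have hiq : i ≠ q := by intro he; subst he; rw [Function.update_self] at hi; exact CubeF.noConfusion hi
  rw [Function.update_of_ne hjq] at hj
  rw [Function.update_of_ne hiq] at hi
  exact hnd ⟨i, j, hij, hi, hj⟩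

lemma csFun_update_one {x : CubeB n} (hnd : ¬ Degen x) {q : Fin n} (hq : x q = CubeF.mid) :
    csFun n (Function.update x q CubeF.one) =
      Finsupp.single ((csSet x).erase q.castSucc) 1 := by
  rw [csFun_eq_of_not_degen (not_degen_update_one hnd hq)]
  congr 1
  rw [csSet_eq, csSet_eq, mids_update (by intro h; exact CubeF.noConfusion h),
    pIdx_update_of_ne_zero (by rw [hq]; intro h; exact CubeF.noConfusion h)
      (by intro h; exact CubeF.noConfusion h),
    Finset.image_erase (Fin.castSucc_injective n),
    Finset.erase_insert_of_ne]
  intro he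
  have := mid_lt_pIdx hnd hq
  rw [he] at this; simp at this

lemma not_degen_update_zero_max {x : CubeB n} (hnd : ¬ Degen x) {q : Fin n}
    (hmax : ∀ r : Fin n, x r = CubeF.mid → (r : ℕ) ≤ (q : ℕ)) :
    ¬ Degen (Function.update x q CubeF.zero) := by
  rintro ⟨i, j, hij, hi, hj⟩
  have hjq : j ≠ q := by intro he; subst he; rw [Function.update_self] at hj; exact CubeF.noConfusion hj
  rw [Function.update_of_ne hjq] at hj
  by_cases hiq : i = q
  · subst hiq
    have h1 := hmax j hj
    have h2 : (i : ℕ) < (j : ℕ) := hij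
    omega
  · rw [Function.update_of_ne hiq] at hi
    exact hnd ⟨i, j, hij, hi, hj⟩

end CartanSerre
namespace CartanSerre

open Finsupp CubeF Function

variable {n : ℕ}

lemma erase_pIdx_csSet {x : CubeB n} (hnd : ¬ Degen x) :
    (csSet x).erase (pIdx x) = (mids x).image Fin.castSucc := by
  rw [csSet_eq, Finset.erase_insert (pIdx_not_mem_image hnd)]

lemma csFun_update_zero_max {x : CubeB n} (hnd : ¬ Degen x) {q : Fin n} (hq : x q = CubeF.mid)
    (hmax : ∀ r : Fin n, x r = CubeF.mid → (r : ℕ) ≤ (q : ℕ)) :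
    csFun n (Function.update x q CubeF.zero) =
      Finsupp.single ((mids x).image Fin.castSucc) 1 := by
  rw [csFun_eq_of_not_degen (not_degen_update_zero_max hnd hmax)]
  congr 1
  rw [csSet_eq, mids_update (by intro h; exact CubeF.noConfusion h),
    pIdx_update_zero (fun j hj => by
      intro hz
      exact hnd ⟨j, q, by rwa [Fin.lt_iff_val_lt_val], hz, hq⟩),
    Finset.image_erase (Fin.castSucc_injective n),
    Finset.insert_erase (Finset.mem_image_of_mem _ (mem_mids.mpr hq))]

lemma csFun_update_zero_notmax {x : CubeB n} {q r : Fin n} (hr : x r = CubeF.mid)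
    (hqr : q < r) : csFun n (Function.update x q CubeF.zero) = 0 := by
  apply csFun_eq_of_degen
  refine ⟨q, r, hqr, Function.update_self _ _ _, ?_⟩
  rw [Function.update_of_ne (by intro he; subst he; exact absurd hqr (lt_irrefl _))]
  exact hr

lemma csFun_update_eq_of_degen {x : CubeB n} (hdeg : Degen x) {i : Fin n}
    (hi : x i = CubeF.mid) :
    csFun n (Function.update x i CubeF.one) = csFun n (Function.update x i CubeF.zero) := by
  obtain ⟨a, b, hab, ha, hb⟩ := hdeg
  have hbM : b ∈ mids x := mem_mids.mpr hb
  set μ := (mids x).max' ⟨b, hbM⟩ with hμdef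
  have hμM : μ ∈ mids x := (mids x).max'_mem ⟨b, hbM⟩
  have hμmid : x μ = CubeF.mid := mem_mids.mp hμM
  have hbμ : (b : ℕ) ≤ (μ : ℕ) := (mids x).le_max' b hbM
  have haμ : a < μ := by
    have : (a : ℕ) < (b : ℕ) := hab
    exact Fin.lt_def.mpr (by omega)
  by_cases hiμ : i = μ
  · subst hiμ
    by_cases h2 : ∃ a' b' : Fin n, a' < b' ∧ x a' = CubeF.zero ∧ x b' = CubeF.mid ∧ b' ≠ μ
    · obtain ⟨a', b', hab', ha', hb', hbi⟩ := h2
      have hai : a' ≠ μ := by intro he; rw [he, hμmid] at ha'; exact CubeF.noConfusion ha'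
      rw [csFun_eq_of_degen ⟨a', b', hab', by rwa [Function.update_of_ne hai],
          by rwa [Function.update_of_ne hbi]⟩,
        csFun_eq_of_degen ⟨a', b', hab', by rwa [Function.update_of_ne hai],
          by rwa [Function.update_of_ne hbi]⟩]
    · push_neg at h2
      have hnd1 : ¬ Degen (Function.update x μ CubeF.one) := by
        rintro ⟨i', j', hij', hi', hj'⟩
        have hji : j' ≠ μ := by
          intro he; rw [he, Function.update_self] at hj'; exact CubeF.noConfusion hj'
        rw [Function.update_of_ne hji] at hj'
        have hii : i' ≠ μ := by
          intro he; rw [he, Function.update_self] at hi'; exact CubeF.noConfusion hi'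
        rw [Function.update_of_ne hii] at hi'
        exact hji (h2 i' j' hij' hi' hj')
      have hnd0 : ¬ Degen (Function.update x μ CubeF.zero) := by
        rintro ⟨i', j', hij', hi', hj'⟩
        have hji : j' ≠ μ := by
          intro he; rw [he, Function.update_self] at hj'; exact CubeF.noConfusion hj'
        rw [Function.update_of_ne hji] at hj'
        by_cases hii : i' = μ
        · have h1 : (j' : ℕ) ≤ (μ : ℕ) := (mids x).le_max' j' (mem_mids.mpr hj')
          have h2 : (i' : ℕ) < (j' : ℕ) := hij'
          rw [hii] at h2
          omega
        · rw [Function.update_of_ne hii] at hi'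
          exact hji (h2 i' j' hij' hi' hj')
      rw [csFun_eq_of_not_degen hnd1, csFun_eq_of_not_degen hnd0]
      have hpl : (pIdx x : ℕ) < (μ : ℕ) := by
        have h1 := pIdx_le ha
        have h2 : (a : ℕ) < (μ : ℕ) := haμ
        omega
      congr 1
      rw [csSet_eq, csSet_eq, pIdx_update_of_lt hpl, pIdx_update_of_lt hpl,
        mids_update (by intro h; exact CubeF.noConfusion h),
        mids_update (by intro h; exact CubeF.noConfusion h)]
  · have hμi : μ ≠ i := fun he => hiμ he.symm
    have hai : a ≠ i := by intro he; rw [he, hi] at ha; exact CubeF.noConfusion ha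
    rw [csFun_eq_of_degen ⟨a, μ, haμ, by rwa [Function.update_of_ne hai],
        by rwa [Function.update_of_ne hμi]⟩,
      csFun_eq_of_degen ⟨a, μ, haμ, by rwa [Function.update_of_ne hai],
        by rwa [Function.update_of_ne hμi]⟩]

lemma filter_lt_pIdx {x : CubeB n} (hnd : ¬ Degen x) :
    (csSet x).filter (fun w => w < pIdx x) = (mids x).image Fin.castSucc := by
  ext v
  simp only [Finset.mem_filter, csSet_eq, Finset.mem_insert]
  constructor
  · rintro ⟨hv | hv, hlt⟩
    · exact absurd hv (by intro he; rw [he] at hlt; exact absurd hlt (lt_irrefl _))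
    · exact hv
  · intro hv
    refine ⟨Or.inr hv, ?_⟩
    rcases Finset.mem_image.mp hv with ⟨q, hq, he⟩
    rw [← he]
    exact Fin.lt_def.mpr (by simpa using mid_lt_pIdx hnd (mem_mids.mp hq))

lemma filter_lt_castSucc {x : CubeB n} (hnd : ¬ Degen x) {q : Fin n} (hq : x q = CubeF.mid) :
    (csSet x).filter (fun w => w < q.castSucc) = ((mids x).filter (fun r => r < q)).image Fin.castSucc := by
  ext v
  simp only [Finset.mem_filter, csSet_eq, Finset.mem_insert, Finset.mem_image]
  constructor
  · rintro ⟨hv | hv, hlt⟩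
    · exfalso
      rw [hv] at hlt
      have := mid_lt_pIdx hnd hq
      have h2 : ((pIdx x : ℕ)) < (q : ℕ) := by simpa [Fin.lt_def] using hlt
      omega
    · rcases hv with ⟨r, hr, he⟩
      refine ⟨r, ⟨hr, ?_⟩, he⟩
      rw [← he] at hlt
      exact Fin.castSucc_lt_castSucc_iff.mp hlt
  · rintro ⟨r, hr, he⟩
    obtain ⟨hrm, hrq⟩ := hr
    exact ⟨Or.inr ⟨r, hrm, he⟩, by rw [← he]; exact Fin.castSucc_lt_castSucc_iff.mpr hrq⟩

lemma eSign_eq {x : CubeB n} (q : Fin n) :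
    (Finset.univ.filter fun j => j < q ∧ x j = CubeF.mid) = (mids x).filter (fun r => r < q) := by
  ext j; simp [mem_mids, and_comm]

lemma filter_lt_max {x : CubeB n} {q : Fin n} (hq : x q = CubeF.mid)
    (hmax : ∀ r : Fin n, x r = CubeF.mid → (r : ℕ) ≤ (q : ℕ)) :
    (mids x).filter (fun r => r < q) = (mids x).erase q := by
  ext r
  simp only [Finset.mem_filter, Finset.mem_erase]
  constructor
  · rintro ⟨hr, hlt⟩
    exact ⟨by intro he; rw [he] at hlt; exact absurd hlt (lt_irrefl _), hr⟩
  · rintro ⟨hne, hr⟩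
    refine ⟨hr, ?_⟩
    have := hmax r (mem_mids.mp hr)
    have hne' : (r : ℕ) ≠ (q : ℕ) := fun he => hne (Fin.ext he)
    exact Fin.lt_def.mpr (by omega)

end CartanSerre
namespace CartanSerre

open Finsupp CubeF Function

variable {n : ℕ}

lemma chainmap_basis (x : CubeB n) :
    simpBd n (csFun n x) = csL n (cubeBdFun n x) := by
  have hRHS : csL n (cubeBdFun n x) =
      ∑ i ∈ mids x, ((-1 : ℤ) ^ ((mids x).filter (fun r => r < i)).card) •
        (csFun n (Function.update x i CubeF.one) - csFun n (Function.update x i CubeF.zero)) := by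
    rw [cubeBdFun, map_sum]
    refine Finset.sum_congr rfl (fun i hi => ?_)
    rw [map_smul, map_sub, csL, lift_single, lift_single, one_smul, one_smul, eSign_eq]
  rw [hRHS]
  by_cases hdeg : Degen x
  · rw [csFun_eq_of_degen hdeg, map_zero]
    symm
    refine Finset.sum_eq_zero (fun i hi => ?_)
    rw [csFun_update_eq_of_degen hdeg (mem_mids.mp hi), sub_self, smul_zero]
  · rw [csFun_eq_of_not_degen hdeg, simpBd, lift_single, one_smul]
    rcases Finset.eq_empty_or_nonempty (mids x) with hM | hM
    · rw [hM, Finset.sum_empty, simpBdFun, if_neg]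
      rw [csSet_card hdeg, cubeDeg_eq_card, hM]
      simp
    · set μ := (mids x).max' hM with hμdef
      have hμM : μ ∈ mids x := (mids x).max'_mem hM
      have hμmid : x μ = CubeF.mid := mem_mids.mp hμM
      have hmax : ∀ r : Fin n, x r = CubeF.mid → (r : ℕ) ≤ (μ : ℕ) :=
        fun r hr => (mids x).le_max' r (mem_mids.mpr hr)
      have hMpos : 0 < (mids x).card := Finset.card_pos.mpr hM
      have hcard2 : 2 ≤ (csSet x).card := by
        rw [csSet_card hdeg, cubeDeg_eq_card]; omega
      have hsplit : ∀ F : Fin (n + 1) → SimpChain n,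
          ∑ v ∈ csSet x, F v = F (pIdx x) + ∑ q ∈ mids x, F q.castSucc := by
        intro F
        rw [csSet_eq, Finset.sum_insert (pIdx_not_mem_image hdeg),
          Finset.sum_image (fun a _ b _ h => Fin.castSucc_injective n h)]
      rw [simpBdFun, if_pos hcard2, hsplit]
      have hFp : ((csSet x).filter (fun w => w < pIdx x)).card = (mids x).card := by
        rw [filter_lt_pIdx hdeg, Finset.card_image_of_injective _ (Fin.castSucc_injective n)]
      have hiter : ∀ q ∈ mids x,
          ((-1 : ℤ) ^ ((csSet x).filter (fun w => w < q.castSucc)).card) •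
              (Finsupp.single ((csSet x).erase q.castSucc) (1 : ℤ)) =
            ((-1 : ℤ) ^ ((mids x).filter (fun r => r < q)).card) •
              (Finsupp.single ((csSet x).erase q.castSucc) (1 : ℤ)) := by
        intro q hq
        rw [filter_lt_castSucc hdeg (mem_mids.mp hq),
          Finset.card_image_of_injective _ (Fin.castSucc_injective n)]
      rw [Finset.sum_congr rfl hiter, hFp]
      have hRright : ∀ i ∈ mids x,
          ((-1 : ℤ) ^ ((mids x).filter (fun r => r < i)).card) •
              (csFun n (Function.update x i CubeF.one) -
                csFun n (Function.update x i CubeF.zero)) =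
            ((-1 : ℤ) ^ ((mids x).filter (fun r => r < i)).card) •
                (Finsupp.single ((csSet x).erase i.castSucc) (1 : ℤ)) -
              (if i = μ then
                ((-1 : ℤ) ^ ((mids x).filter (fun r => r < i)).card) •
                  (Finsupp.single ((mids x).image Fin.castSucc) (1 : ℤ)) else 0) := by
        intro i hi
        rw [csFun_update_one hdeg (mem_mids.mp hi)]
        by_cases hiμ : i = μ
        · rw [if_pos hiμ, hiμ, csFun_update_zero_max hdeg hμmid hmax, smul_sub]
        · rw [if_neg hiμ, csFun_update_zero_notmax hμmid, sub_zero, sub_zero]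
          have h1 := hmax i (mem_mids.mp hi)
          have h2 : (i : ℕ) ≠ (μ : ℕ) := fun he => hiμ (Fin.ext he)
          exact Fin.lt_def.mpr (by omega)
      rw [Finset.sum_congr rfl hRright, Finset.sum_sub_distrib, Finset.sum_ite_eq' (mids x) μ,
        if_pos hμM]
      have hsign : ((-1 : ℤ)) ^ (mids x).card =
          -(-1 : ℤ) ^ ((mids x).filter (fun r => r < μ)).card := by
        rw [filter_lt_max hμmid hmax, Finset.card_erase_of_mem hμM]
        have h1 : ((mids x).card - 1) + 1 = (mids x).card := by omega
        conv_lhs => rw [← h1]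
        rw [pow_succ]
        ring
      rw [hsign, erase_pIdx_csSet hdeg, neg_smul, sub_eq_add_neg, add_comm]
end CartanSerre
namespace CartanSerre

open Finsupp CubeF Function

variable {n : ℕ}

lemma csL_chainmap (c : CubeChain n) : simpBd n (csL n c) = csL n (cubeBd n c) := by
  have h : (simpBd n).comp (csL n) = (csL n).comp (cubeBd n) := by
    apply Finsupp.lhom_ext
    intro x b
    simp only [LinearMap.comp_apply]
    rw [csL, lift_single, cubeBd, lift_single, map_smul, map_smul]
    rw [show Finsupp.lift (SimpChain n) ℤ (CubeB n) (csFun n) = csL n from rfl, chainmap_basis]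
  exact LinearMap.congr_fun h c

lemma support_lift_subset {α M : Type*} [DecidableEq M]
    (f : α → (M →₀ ℤ)) (c : α →₀ ℤ) {y : M}
    (hy : y ∈ (Finsupp.lift (M →₀ ℤ) ℤ α f c).support) :
    ∃ x ∈ c.support, y ∈ (f x).support := by
  rw [Finsupp.lift_apply] at hy
  have := Finsupp.support_sum hy
  rcases Finset.mem_biUnion.mp this with ⟨x, hx, hyx⟩
  refine ⟨x, hx, ?_⟩
  exact Finsupp.support_smul hyx

lemma csL_homog (m : ℕ) (c : CubeChain n) (h : cubeHomog n m c) :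
    simpHomog n m (csL n c) := by
  intro s hs
  obtain ⟨x, hx, hsx⟩ := support_lift_subset (csFun n) c hs
  by_cases hdeg : Degen x
  · rw [csFun_eq_of_degen hdeg] at hsx
    simp at hsx
  · rw [csFun_eq_of_not_degen hdeg] at hsx
    have := Finsupp.support_single_subset hsx
    rw [Finset.mem_singleton] at this
    rw [this, csSet_card hdeg, h x hx]

end CartanSerre
namespace CartanSerre

open Finsupp CubeF Function

variable {n : ℕ}

/-- Contracting homotopy for the simplicial complex: cone on the vertex `0`. -/
noncomputable def hSimpFun (n : ℕ) (s : SimpB n) : SimpChain n :=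
  if (0 : Fin (n + 1)) ∈ s then 0 else Finsupp.single (insert 0 s) 1

noncomputable def hSimpL (n : ℕ) : SimpChain n →ₗ[ℤ] SimpChain n :=
  Finsupp.lift (SimpChain n) ℤ (SimpB n) (hSimpFun n)

noncomputable def etaEpsSimpFun (n : ℕ) (s : SimpB n) : SimpChain n :=
  if s.card = 1 then Finsupp.single {0} 1 else if s = ∅ then Finsupp.single ∅ 1 else 0

noncomputable def etaEpsSimpL (n : ℕ) : SimpChain n →ₗ[ℤ] SimpChain n :=
  Finsupp.lift (SimpChain n) ℤ (SimpB n) (etaEpsSimpFun n)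

lemma simp_homotopy_basis (s : SimpB n) :
    simpBd n (hSimpFun n s) + hSimpL n (simpBdFun n s) =
      Finsupp.single s 1 - etaEpsSimpFun n s := by
  rcases Finset.eq_empty_or_nonempty s with hs | hs
  · subst hs
    rw [hSimpFun, if_neg (Finset.notMem_empty _), etaEpsSimpFun, if_neg (by simp), if_pos rfl]
    rw [simpBd, lift_single, one_smul, simpBdFun, if_neg (by simp), simpBdFun,
      if_neg (by simp), map_zero]
    simp
  · by_cases h0 : (0 : Fin (n + 1)) ∈ s
    · rw [hSimpFun, if_pos h0, map_zero, zero_add]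
      by_cases hc1 : s.card = 1
      · obtain ⟨a, ha⟩ := Finset.card_eq_one.mp hc1
        have ha0 : a = 0 := by rw [ha] at h0; exact (Finset.mem_singleton.mp h0).symm
        subst ha0; subst ha
        rw [simpBdFun, if_neg (by simp), map_zero, etaEpsSimpFun, if_pos hc1]
        simp
      · have hc2 : 2 ≤ s.card := by
          have := Finset.card_pos.mpr hs; omega
        rw [simpBdFun, if_pos hc2, map_sum]
        rw [Finset.sum_eq_single_of_mem 0 h0 ?side]
        case side =>
          intro v hv hv0
          rw [map_smul, hSimpL, lift_single, one_smul, hSimpFun,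
            if_pos (Finset.mem_erase.mpr ⟨Ne.symm hv0, h0⟩), smul_zero]
        · rw [map_smul, hSimpL, lift_single, one_smul, hSimpFun,
            if_neg (Finset.notMem_erase _ _), Finset.insert_erase h0]
          have hf : (s.filter fun w => w < 0).card = 0 := by
            rw [Finset.card_eq_zero, Finset.filter_eq_empty_iff]
            intro v _; exact Fin.not_lt_zero v
          rw [hf, pow_zero, one_smul, etaEpsSimpFun, if_neg hc1,
            if_neg (Finset.nonempty_iff_ne_empty.mp hs), sub_zero]
    · -- 0 ∉ s, s nonempty
      have hins2 : 2 ≤ (insert (0 : Fin (n + 1)) s).card := by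
        rw [Finset.card_insert_of_notMem h0]
        have := Finset.card_pos.mpr hs; omega
      rw [hSimpFun, if_neg h0, simpBd, lift_single, one_smul, simpBdFun, if_pos hins2,
        Finset.sum_insert h0]
      have hf0 : ((insert (0 : Fin (n + 1)) s).filter fun w => w < 0).card = 0 := by
        rw [Finset.card_eq_zero, Finset.filter_eq_empty_iff]
        intro v _; exact Fin.not_lt_zero v
      rw [hf0, pow_zero, one_smul, Finset.erase_insert h0]
      have hterm : ∀ v ∈ s,
          ((-1 : ℤ) ^ ((insert (0 : Fin (n + 1)) s).filter fun w => w < v).card) •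
              (Finsupp.single ((insert (0 : Fin (n + 1)) s).erase v) (1 : ℤ)) =
            -(((-1 : ℤ) ^ (s.filter fun w => w < v).card) •
              (Finsupp.single (insert (0 : Fin (n + 1)) (s.erase v)) (1 : ℤ))) := by
        intro v hv
        have hv0 : v ≠ 0 := by intro he; rw [he] at hv; exact h0 hv
        have hlt : (0 : Fin (n + 1)) < v := Fin.pos_of_ne_zero hv0
        have hfe : (insert (0 : Fin (n + 1)) s).filter (fun w => w < v) =
            insert 0 (s.filter fun w => w < v) := by
          rw [Finset.filter_insert, if_pos hlt]
        rw [hfe, Finset.card_insert_of_notMem (fun hmem => h0 (Finset.mem_filter.mp hmem).1),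
          Finset.erase_insert_of_ne (Ne.symm hv0), pow_succ, mul_neg_one, neg_smul]
      rw [Finset.sum_congr rfl hterm]
      by_cases hc1 : s.card = 1
      · obtain ⟨a, ha⟩ := Finset.card_eq_one.mp hc1
        subst ha
        rw [simpBdFun, if_neg (by simp), map_zero, add_zero, etaEpsSimpFun, if_pos hc1]
        rw [Finset.sum_singleton]
        have hfa : (({a} : Finset (Fin (n+1))).filter fun w => w < a).card = 0 := by
          rw [Finset.card_eq_zero, Finset.filter_eq_empty_iff]
          intro v hv
          rw [Finset.mem_singleton] at hv; subst hv; exact lt_irrefl _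
        rw [hfa, pow_zero, one_smul, Finset.erase_singleton]
        rw [show (insert (0 : Fin (n+1)) (∅ : Finset (Fin (n+1)))) = {0} from rfl]
        abel
      · have hc2 : 2 ≤ s.card := by
          have := Finset.card_pos.mpr hs; omega
        rw [simpBdFun, if_pos hc2, map_sum, etaEpsSimpFun, if_neg hc1,
          if_neg (Finset.nonempty_iff_ne_empty.mp hs), sub_zero]
        have hterm2 : ∀ v ∈ s,
            hSimpL n (((-1 : ℤ) ^ (s.filter fun w => w < v).card) •
              (Finsupp.single (s.erase v) (1 : ℤ))) =
            ((-1 : ℤ) ^ (s.filter fun w => w < v).card) •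
              (Finsupp.single (insert (0 : Fin (n + 1)) (s.erase v)) (1 : ℤ)) := by
          intro v hv
          rw [map_smul, hSimpL, lift_single, one_smul, hSimpFun,
            if_neg (fun hmem => h0 (Finset.mem_of_mem_erase hmem))]
        rw [Finset.sum_congr rfl hterm2]
        rw [add_assoc, ← Finset.sum_add_distrib]
        rw [Finset.sum_eq_zero (fun v hv => by abel), add_zero]
end CartanSerre
namespace CartanSerre

open Finsupp CubeF Function

variable {n : ℕ}

/-- Output basis element of the cube homotopy at position `i`. -/
def yB (x : CubeB n) (i : Fin n) : CubeB n :=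
  fun j => if j < i then CubeF.zero else if j = i then CubeF.mid else x j

/-- Truncation: positions `< k` set to `[0]`. -/
def tB (x : CubeB n) (k : ℕ) : CubeB n := fun j => if (j : ℕ) < k then CubeF.zero else x j

/-- Index set for the cube homotopy. -/
def aSet (x : CubeB n) : Finset (Fin n) :=
  Finset.univ.filter (fun i => x i = CubeF.one ∧ ∀ j, j < i → x j ≠ CubeF.mid)

/-- Secondary index set (between the first and second `mid`). -/
def bSet (x : CubeB n) (q : Fin n) : Finset (Fin n) :=
  Finset.univ.filter (fun i => x i = CubeF.one ∧ q < i ∧ ∀ j, j < i → j ≠ q → x j ≠ CubeF.mid)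

/-- Contracting homotopy for the cubical complex, on a basis element. -/
noncomputable def hCubeFun (n : ℕ) (x : CubeB n) : CubeChain n :=
  ∑ i ∈ aSet x, Finsupp.single (yB x i) 1

noncomputable def hCubeL (n : ℕ) : CubeChain n →ₗ[ℤ] CubeChain n :=
  Finsupp.lift (CubeChain n) ℤ (CubeB n) (hCubeFun n)

noncomputable def etaEpsCubeFun (n : ℕ) (x : CubeB n) : CubeChain n :=
  if cubeDeg x = 0 then Finsupp.single (fun _ => CubeF.zero) 1 else 0

lemma mem_aSet {x : CubeB n} {i : Fin n} :
    i ∈ aSet x ↔ x i = CubeF.one ∧ (i : ℕ) < (mIdx x : ℕ) := by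
  rw [aSet, Finset.mem_filter]
  constructor
  · rintro ⟨-, h1, h2⟩
    refine ⟨h1, ?_⟩
    by_contra hc
    push_neg at hc
    have hn : ((mIdx x : ℕ)) < n := lt_of_le_of_lt hc i.isLt
    have hmid := mIdx_self hn
    have hne : (⟨mIdx x, hn⟩ : Fin n) ≠ i := by
      intro he; rw [he, h1] at hmid; exact CubeF.noConfusion hmid
    have hlt : (⟨mIdx x, hn⟩ : Fin n) < i := lt_of_le_of_ne (by exact hc) hne
    exact h2 _ hlt hmid
  · rintro ⟨h1, h2⟩
    refine ⟨Finset.mem_univ _, h1, fun j hj => ?_⟩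
    have : (j : ℕ) < (i : ℕ) := hj
    exact ne_mid_of_lt_mIdx (by omega)

lemma mem_bSet {x : CubeB n} {q i : Fin n} :
    i ∈ bSet x q ↔ x i = CubeF.one ∧ q < i ∧ ∀ j, j < i → j ≠ q → x j ≠ CubeF.mid := by
  rw [bSet, Finset.mem_filter]
  simp

lemma yB_eq_tB {x : CubeB n} {i : Fin n} (hi : x i = CubeF.mid) :
    yB x i = tB x (i : ℕ) := by
  funext j
  rw [yB, tB]
  rcases lt_trichotomy j i with h | h | h
  · rw [if_pos h, if_pos (by exact h)]
  · subst h; rw [if_neg (lt_irrefl _), if_pos rfl, if_neg (by omega)]; exact hi.symm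
  · have : ¬ ((j : ℕ) < (i : ℕ)) := by have : (i:ℕ) < (j:ℕ) := h; omega
    rw [if_neg (by exact not_lt_of_gt h), if_neg this, if_neg (by intro he; subst he; exact absurd h (lt_irrefl _))]

lemma tB_zero (x : CubeB n) : tB x 0 = x := by
  funext j; rw [tB, if_neg (by omega)]

lemma tB_all (x : CubeB n) : tB x n = fun _ => CubeF.zero := by
  funext j; rw [tB, if_pos j.isLt]

lemma mids_yB {x : CubeB n} {i : Fin n} (hi : i ∈ aSet x) :
    mids (yB x i) = insert i (mids x) := by
  obtain ⟨h1, h2⟩ := mem_aSet.mp hi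
  ext j
  rw [mem_mids, Finset.mem_insert, mem_mids, yB]
  rcases lt_trichotomy j i with h | h | h
  · rw [if_pos h]
    have hjne : (j : ℕ) < (i : ℕ) := h
    constructor
    · intro hz; exact CubeF.noConfusion hz
    · rintro (he | hm)
      · subst he; exact absurd h (lt_irrefl _)
      · exact absurd hm (ne_mid_of_lt_mIdx (by omega))
  · subst h; rw [if_neg (lt_irrefl _), if_pos rfl]
    simp
  · rw [if_neg (not_lt_of_gt h), if_neg (by intro he; subst he; exact absurd h (lt_irrefl _))]
    constructor
    · exact Or.inr
    · rintro (he | hm)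
      · subst he; exact absurd h (lt_irrefl _)
      · exact hm

lemma i_not_mem_mids {x : CubeB n} {i : Fin n} (h1 : x i = CubeF.one) : i ∉ mids x := by
  rw [mem_mids, h1]; intro h; exact CubeF.noConfusion h

end CartanSerre
namespace CartanSerre

open Finsupp CubeF Function

variable {n : ℕ}

lemma update_yB_one {x : CubeB n} {i : Fin n} (h1 : x i = CubeF.one) :
    Function.update (yB x i) i CubeF.one = tB x (i : ℕ) := by
  funext j
  rw [Function.update_apply, yB, tB]
  by_cases h : j = i
  · subst h; rw [if_pos rfl, if_neg (by omega)]; exact h1.symm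
  · rw [if_neg h]
    rcases lt_or_gt_of_ne h with hlt | hgt
    · rw [if_pos hlt, if_pos (by exact hlt)]
    · rw [if_neg (not_lt_of_gt hgt), if_neg h, if_neg (by
        have : (i : ℕ) < (j : ℕ) := hgt; omega)]

lemma update_yB_zero {x : CubeB n} {i : Fin n} :
    Function.update (yB x i) i CubeF.zero = tB x ((i : ℕ) + 1) := by
  funext j
  rw [Function.update_apply, yB, tB]
  by_cases h : j = i
  · subst h; rw [if_pos rfl, if_pos (by omega)]
  · rw [if_neg h]
    rcases lt_or_gt_of_ne h with hlt | hgt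
    · rw [if_pos hlt, if_pos (by have : (j:ℕ) < (i:ℕ) := hlt; omega)]
    · rw [if_neg (not_lt_of_gt hgt), if_neg h, if_neg (by
        have : (i : ℕ) < (j : ℕ) := hgt; omega)]

lemma cubeBdFun_yB {x : CubeB n} {i : Fin n} (hi : i ∈ aSet x) :
    cubeBdFun n (yB x i) =
      (Finsupp.single (tB x (i : ℕ)) 1 - Finsupp.single (tB x ((i : ℕ) + 1)) 1) -
        ∑ q ∈ mids x, ((-1 : ℤ) ^ ((mids x).filter (fun r => r < q)).card) •
          (Finsupp.single (Function.update (yB x i) q CubeF.one) 1 -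
            Finsupp.single (Function.update (yB x i) q CubeF.zero) 1) := by
  obtain ⟨h1, h2⟩ := mem_aSet.mp hi
  have hset : (Finset.univ.filter fun j => yB x i j = CubeF.mid) = insert i (mids x) := by
    rw [show (Finset.univ.filter fun j => yB x i j = CubeF.mid) = mids (yB x i) from rfl,
      mids_yB hi]
  rw [cubeBdFun, hset, Finset.sum_insert (i_not_mem_mids h1)]
  have hsign_i : (Finset.univ.filter fun j => j < i ∧ yB x i j = CubeF.mid).card = 0 := by
    rw [Finset.card_eq_zero, Finset.filter_eq_empty_iff]
    rintro j -
    rintro ⟨hj, hmid⟩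
    rw [yB, if_pos hj] at hmid
    exact CubeF.noConfusion hmid
  rw [hsign_i, pow_zero, one_smul, update_yB_one h1, update_yB_zero]
  congr 1
  have hterm : ∀ q ∈ mids x,
      ((-1 : ℤ) ^ (Finset.univ.filter fun j => j < q ∧ yB x i j = CubeF.mid).card) •
          (Finsupp.single (Function.update (yB x i) q CubeF.one) (1 : ℤ) -
            Finsupp.single (Function.update (yB x i) q CubeF.zero) 1) =
        -(((-1 : ℤ) ^ ((mids x).filter (fun r => r < q)).card) •
          (Finsupp.single (Function.update (yB x i) q CubeF.one) (1 : ℤ) -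
            Finsupp.single (Function.update (yB x i) q CubeF.zero) 1)) := by
    intro q hq
    have hiq : i < q := by
      have := mIdx_le (mem_mids.mp hq)
      exact Fin.lt_def.mpr (by omega)
    have hfe : (Finset.univ.filter fun j => j < q ∧ yB x i j = CubeF.mid) =
        insert i ((mids x).filter (fun r => r < q)) := by
      ext j
      simp only [Finset.mem_filter, Finset.mem_univ, true_and, Finset.mem_insert, mem_mids]
      constructor
      · rintro ⟨hjq, hmid⟩
        rw [yB] at hmid
        rcases lt_trichotomy j i with h | h | h
        · rw [if_pos h] at hmid; exact absurd hmid (by intro hh; exact CubeF.noConfusion hh)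
        · exact Or.inl h
        · rw [if_neg (not_lt_of_gt h),
            if_neg (by intro he; subst he; exact absurd h (lt_irrefl _))] at hmid
          exact Or.inr ⟨hmid, hjq⟩
      · rintro (he | ⟨hmid, hjq⟩)
        · subst he
          exact ⟨hiq, by rw [yB, if_neg (lt_irrefl _), if_pos rfl]⟩
        · refine ⟨hjq, ?_⟩
          have hji : i < j := by
            rcases lt_trichotomy j i with h | h | h
            · exact absurd hmid (ne_mid_of_lt_mIdx (by
                have : (j : ℕ) < (i : ℕ) := h; omega))
            · subst h; rw [hmid] at h1; exact absurd h1 (by intro hh; exact CubeF.noConfusion hh)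
            · exact h
          rw [yB, if_neg (not_lt_of_gt hji),
            if_neg (by intro he; subst he; exact absurd hji (lt_irrefl _))]
          exact hmid
    have hnotmem : i ∉ (mids x).filter (fun r => r < q) :=
      fun hmem => i_not_mem_mids h1 (Finset.mem_filter.mp hmem).1
    rw [hfe, Finset.card_insert_of_notMem hnotmem, pow_succ, mul_neg_one, neg_smul]
  rw [Finset.sum_congr rfl hterm, Finset.sum_neg_distrib, ← sub_eq_add_neg]
end CartanSerre
namespace CartanSerre

open Finsupp CubeF Function

variable {n : ℕ}

lemma mem_aSet' {x : CubeB n} {i : Fin n} :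
    i ∈ aSet x ↔ x i = CubeF.one ∧ ∀ j, j < i → x j ≠ CubeF.mid := by
  rw [aSet, Finset.mem_filter]; simp

lemma yB_update_lt {x : CubeB n} {i q : Fin n} (hiq : i < q) (c : CubeF) :
    yB (Function.update x q c) i = Function.update (yB x i) q c := by
  funext j
  simp only [yB, Function.update_apply]
  split_ifs <;> first | rfl | (exfalso; simp only [Fin.lt_def, Fin.ext_iff] at *; omega)

lemma yB_update_gt {x : CubeB n} {i q : Fin n} (hqi : q < i) (c : CubeF) :
    yB (Function.update x q c) i = yB x i := by
  funext j
  simp only [yB, Function.update_apply]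
  split_ifs <;> first | rfl | (exfalso; simp only [Fin.lt_def, Fin.ext_iff] at *; omega)

lemma yB_update_self {x : CubeB n} {q : Fin n} (c : CubeF) :
    yB (Function.update x q c) q = yB x q := by
  funext j
  simp only [yB, Function.update_apply]
  split_ifs <;> first | rfl | (exfalso; simp only [Fin.lt_def, Fin.ext_iff] at *; omega)

lemma hCubeFun_update_notfirst {x : CubeB n} {q : Fin n} (hq : x q = CubeF.mid)
    (hne : (mIdx x : ℕ) < (q : ℕ)) (c : CubeF) :
    hCubeFun n (Function.update x q c) =
      ∑ i ∈ aSet x, Finsupp.single (Function.update (yB x i) q c) 1 := by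
  have hFn : (mIdx x : ℕ) < n := by have := q.isLt; omega
  have hxFmid : x ⟨mIdx x, hFn⟩ = CubeF.mid := mIdx_self hFn
  have hxFq : (⟨mIdx x, hFn⟩ : Fin n) ≠ q := by
    intro he; rw [Fin.ext_iff] at he; simp at he; omega
  have hA : aSet (Function.update x q c) = aSet x := by
    ext i
    rw [mem_aSet', mem_aSet']
    constructor
    · rintro ⟨hone, hall⟩
      have hixF : ¬ (⟨mIdx x, hFn⟩ : Fin n) < i := fun hlt =>
        hall _ hlt (by rw [Function.update_of_ne hxFq]; exact hxFmid)
      have hile : (i : ℕ) ≤ (mIdx x : ℕ) := by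
        rw [not_lt] at hixF; exact hixF
      have hiq : i ≠ q := by
        intro he; subst he; omega
      refine ⟨by rwa [Function.update_of_ne hiq] at hone, fun j hj => ?_⟩
      have hjq : j ≠ q := by
        have : (j : ℕ) < (i : ℕ) := hj
        intro he; subst he; omega
      have := hall j hj
      rwa [Function.update_of_ne hjq] at this
    · rintro ⟨hone, hall⟩
      have hilt : (i : ℕ) < (mIdx x : ℕ) := by
        rcases mem_aSet.mp (mem_aSet'.mpr ⟨hone, hall⟩) with ⟨-, h⟩
        exact h
      have hiq : i ≠ q := by intro he; subst he; omega
      refine ⟨by rwa [Function.update_of_ne hiq], fun j hj => ?_⟩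
      have hjq : j ≠ q := by
        have : (j : ℕ) < (i : ℕ) := hj
        intro he; subst he; omega
      rw [Function.update_of_ne hjq]
      exact hall j hj
  rw [hCubeFun, hA]
  refine Finset.sum_congr rfl (fun i hi => ?_)
  have hilt : (i : ℕ) < (mIdx x : ℕ) := (mem_aSet.mp hi).2
  rw [yB_update_lt (Fin.lt_def.mpr (by omega)) c]

lemma hCubeFun_update_first_one {x : CubeB n} {q : Fin n} (hq : x q = CubeF.mid)
    (hfirst : (q : ℕ) = (mIdx x : ℕ)) :
    hCubeFun n (Function.update x q CubeF.one) =
      Finsupp.single (yB x q) 1 +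
        (∑ i ∈ aSet x, Finsupp.single (Function.update (yB x i) q CubeF.one) 1 +
          ∑ i ∈ bSet x q, Finsupp.single (yB x i) 1) := by
  have hAB : aSet (Function.update x q CubeF.one) = insert q (aSet x ∪ bSet x q) := by
    ext i
    rw [mem_aSet', Finset.mem_insert, Finset.mem_union]
    constructor
    · rintro ⟨hone, hall⟩
      rcases lt_trichotomy i q with h | h | h
      · refine Or.inr (Or.inl (mem_aSet.mpr ⟨?_, ?_⟩))
        · rwa [Function.update_of_ne (by intro he; subst he; exact absurd h (lt_irrefl _))] at hone
        · have : (i : ℕ) < (q : ℕ) := h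
          omega
      · exact Or.inl h
      · refine Or.inr (Or.inr (mem_bSet.mpr ⟨?_, h, fun j hj hjq => ?_⟩))
        · rwa [Function.update_of_ne (by intro he; subst he; exact absurd h (lt_irrefl _))] at hone
        · have := hall j hj
          rwa [Function.update_of_ne hjq] at this
    · rintro (he | hA | hB)
      · refine ⟨by rw [he, Function.update_self], fun j hj => ?_⟩
        have hjlt : (j : ℕ) < (q : ℕ) := by rw [← he]; exact hj
        rw [Function.update_of_ne (by intro he2; rw [he2] at hjlt; omega)]
        exact ne_mid_of_lt_mIdx (by omega)
      · obtain ⟨hone, hilt⟩ := mem_aSet.mp hA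
        have hiq : i ≠ q := by intro he; subst he; omega
        refine ⟨by rwa [Function.update_of_ne hiq], fun j hj => ?_⟩
        have hjq : j ≠ q := by
          have : (j : ℕ) < (i : ℕ) := hj
          intro he; subst he; omega
        rw [Function.update_of_ne hjq]
        have : (j : ℕ) < (i : ℕ) := hj
        exact ne_mid_of_lt_mIdx (by omega)
      · obtain ⟨hone, hqi, hall⟩ := mem_bSet.mp hB
        have hiq : i ≠ q := by intro he; subst he; exact absurd hqi (lt_irrefl _)
        refine ⟨by rwa [Function.update_of_ne hiq], fun j hj => ?_⟩
        by_cases hjq : j = q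
        · subst hjq; rw [Function.update_self]; intro h; exact CubeF.noConfusion h
        · rw [Function.update_of_ne hjq]
          exact hall j hj hjq
  have hqnotin : q ∉ aSet x ∪ bSet x q := by
    rw [Finset.mem_union]
    rintro (h | h)
    · rw [mem_aSet'] at h
      rw [h.1] at hq; exact CubeF.noConfusion hq
    · exact absurd (mem_bSet.mp h).2.1 (lt_irrefl _)
  have hdisj : Disjoint (aSet x) (bSet x q) := by
    rw [Finset.disjoint_left]
    intro i hiA hiB
    have h1 := (mem_aSet.mp hiA).2
    have h2 : (q : ℕ) < (i : ℕ) := (mem_bSet.mp hiB).2.1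
    omega
  rw [hCubeFun, hAB, Finset.sum_insert hqnotin, Finset.sum_union hdisj, yB_update_self]
  congr 1
  congr 1
  · refine Finset.sum_congr rfl (fun i hi => ?_)
    have hilt : (i : ℕ) < (mIdx x : ℕ) := (mem_aSet.mp hi).2
    rw [yB_update_lt (Fin.lt_def.mpr (by omega)) CubeF.one]
  · refine Finset.sum_congr rfl (fun i hi => ?_)
    rw [yB_update_gt (mem_bSet.mp hi).2.1]

lemma hCubeFun_update_first_zero {x : CubeB n} {q : Fin n} (hq : x q = CubeF.mid)
    (hfirst : (q : ℕ) = (mIdx x : ℕ)) :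
    hCubeFun n (Function.update x q CubeF.zero) =
      ∑ i ∈ aSet x, Finsupp.single (Function.update (yB x i) q CubeF.zero) 1 +
        ∑ i ∈ bSet x q, Finsupp.single (yB x i) 1 := by
  have hAB : aSet (Function.update x q CubeF.zero) = aSet x ∪ bSet x q := by
    ext i
    rw [mem_aSet', Finset.mem_union]
    constructor
    · rintro ⟨hone, hall⟩
      have hiq : i ≠ q := by
        intro he; subst he; rw [Function.update_self] at hone; exact CubeF.noConfusion hone
      rcases lt_trichotomy i q with h | h | h
      · refine Or.inl (mem_aSet.mpr ⟨?_, ?_⟩)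
        · rwa [Function.update_of_ne hiq] at hone
        · have : (i : ℕ) < (q : ℕ) := h
          omega
      · exact absurd h hiq
      · refine Or.inr (mem_bSet.mpr ⟨?_, h, fun j hj hjq => ?_⟩)
        · rwa [Function.update_of_ne hiq] at hone
        · have := hall j hj
          rwa [Function.update_of_ne hjq] at this
    · rintro (hA | hB)
      · obtain ⟨hone, hilt⟩ := mem_aSet.mp hA
        have hiq : i ≠ q := by intro he; subst he; omega
        refine ⟨by rwa [Function.update_of_ne hiq], fun j hj => ?_⟩
        have hjq : j ≠ q := by
          have : (j : ℕ) < (i : ℕ) := hj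
          intro he; subst he; omega
        rw [Function.update_of_ne hjq]
        have : (j : ℕ) < (i : ℕ) := hj
        exact ne_mid_of_lt_mIdx (by omega)
      · obtain ⟨hone, hqi, hall⟩ := mem_bSet.mp hB
        have hiq : i ≠ q := by intro he; subst he; exact absurd hqi (lt_irrefl _)
        refine ⟨by rwa [Function.update_of_ne hiq], fun j hj => ?_⟩
        by_cases hjq : j = q
        · subst hjq; rw [Function.update_self]; intro h; exact CubeF.noConfusion h
        · rw [Function.update_of_ne hjq]
          exact hall j hj hjq
  have hdisj : Disjoint (aSet x) (bSet x q) := by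
    rw [Finset.disjoint_left]
    intro i hiA hiB
    have h1 := (mem_aSet.mp hiA).2
    have h2 : (q : ℕ) < (i : ℕ) := (mem_bSet.mp hiB).2.1
    omega
  rw [hCubeFun, hAB, Finset.sum_union hdisj]
  congr 1
  · refine Finset.sum_congr rfl (fun i hi => ?_)
    have hilt : (i : ℕ) < (mIdx x : ℕ) := (mem_aSet.mp hi).2
    rw [yB_update_lt (Fin.lt_def.mpr (by omega)) CubeF.zero]
  · refine Finset.sum_congr rfl (fun i hi => ?_)
    rw [yB_update_gt (mem_bSet.mp hi).2.1]
end CartanSerre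
namespace CartanSerre

open Finsupp CubeF Function

variable {n : ℕ}

noncomputable def wTerm (x : CubeB n) (i q : Fin n) : CubeChain n :=
  ((-1 : ℤ) ^ ((mids x).filter (fun r => r < q)).card) •
    (Finsupp.single (Function.update (yB x i) q CubeF.one) 1 -
      Finsupp.single (Function.update (yB x i) q CubeF.zero) 1)

lemma cubeBdFun_yB' {x : CubeB n} {i : Fin n} (hi : i ∈ aSet x) :
    cubeBdFun n (yB x i) =
      (Finsupp.single (tB x (i : ℕ)) 1 - Finsupp.single (tB x ((i : ℕ) + 1)) 1) -
        ∑ q ∈ mids x, wTerm x i q := by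
  rw [cubeBdFun_yB hi]; rfl

lemma telescope (x : CubeB n) :
    ∑ i ∈ aSet x,
        (Finsupp.single (tB x (i : ℕ)) (1 : ℤ) - Finsupp.single (tB x ((i : ℕ) + 1)) 1) =
      Finsupp.single x 1 - Finsupp.single (tB x (mIdx x : ℕ)) 1 := by
  have hsub : aSet x ⊆ Finset.univ.filter (fun i : Fin n => (i : ℕ) < (mIdx x : ℕ)) :=
    fun i hi => Finset.mem_filter.mpr ⟨Finset.mem_univ _, (mem_aSet.mp hi).2⟩
  rw [Finset.sum_subset hsub (by
    intro i hiC hiA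
    have hilt := (Finset.mem_filter.mp hiC).2
    have hxi : x i = CubeF.zero := by
      cases hv : x i with
      | zero => rfl
      | mid => exact absurd hv (ne_mid_of_lt_mIdx hilt)
      | one => exact absurd (mem_aSet.mpr ⟨hv, hilt⟩) hiA
    have ht : tB x (i : ℕ) = tB x ((i : ℕ) + 1) := by
      funext j
      rw [tB, tB]
      by_cases hj : (j : ℕ) < (i : ℕ)
      · rw [if_pos hj, if_pos (by omega)]
      · by_cases hj2 : (j : ℕ) = (i : ℕ)
        · rw [if_neg hj, if_pos (by omega)]
          have : j = i := Fin.ext hj2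
          rw [this, hxi]
        · rw [if_neg hj, if_neg (by omega)]
    rw [ht, sub_self])]
  have hKle : (mIdx x : ℕ) ≤ n := by have := (mIdx x).isLt; omega
  rw [Finset.sum_filter]
  rw [Fin.sum_univ_eq_sum_range (fun a =>
    if a < (mIdx x : ℕ) then
      (Finsupp.single (tB x a) (1 : ℤ) - Finsupp.single (tB x (a + 1)) 1) else 0) n]
  rw [← Finset.sum_filter]
  have hrange : (Finset.range n).filter (fun a => a < (mIdx x : ℕ)) =
      Finset.range (mIdx x : ℕ) := by
    ext a; simp only [Finset.mem_filter, Finset.mem_range]; omega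
  rw [hrange, Finset.sum_range_sub' (fun a => Finsupp.single (tB x a) (1 : ℤ)), tB_zero]

lemma cube_homotopy_basis (x : CubeB n) :
    cubeBd n (hCubeFun n x) + hCubeL n (cubeBdFun n x) =
      Finsupp.single x 1 - etaEpsCubeFun n x := by
  have hL1 : cubeBd n (hCubeFun n x) =
      ∑ i ∈ aSet x,
          (Finsupp.single (tB x (i : ℕ)) (1 : ℤ) - Finsupp.single (tB x ((i : ℕ) + 1)) 1) -
        ∑ i ∈ aSet x, ∑ q ∈ mids x, wTerm x i q := by
    rw [hCubeFun, map_sum,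
      Finset.sum_congr rfl (fun i hi => by
        rw [cubeBd, lift_single, one_smul, cubeBdFun_yB' hi]),
      Finset.sum_sub_distrib]
  have hL2 : hCubeL n (cubeBdFun n x) =
      ∑ q ∈ mids x, ((-1 : ℤ) ^ ((mids x).filter (fun r => r < q)).card) •
        (hCubeFun n (Function.update x q CubeF.one) -
          hCubeFun n (Function.update x q CubeF.zero)) := by
    rw [cubeBdFun, map_sum]
    refine Finset.sum_congr rfl (fun q hq => ?_)
    rw [map_smul, map_sub, hCubeL, lift_single, lift_single, one_smul, one_smul, eSign_eq]
  rcases Finset.eq_empty_or_nonempty (mids x) with hM | hM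
  · have hbd0 : cubeBdFun n x = 0 := by
      rw [cubeBdFun, show (Finset.univ.filter fun i => x i = CubeF.mid) = (∅ : Finset (Fin n))
        from hM]
      exact Finset.sum_empty
    rw [hL1, hbd0, map_zero, add_zero, hM]
    simp only [Finset.sum_empty, Finset.sum_const_zero, sub_zero]
    have hmn : (mIdx x : ℕ) = n := by
      have : mIdx x = Fin.last n := by
        apply mIdx_eq
        · intro j hj hm
          have : j ∈ mids x := mem_mids.mpr hm
          rw [hM] at this
          exact absurd this (Finset.notMem_empty _)
        · intro h; simp only [Fin.val_last] at h; omega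
      rw [this]; rfl
    rw [telescope, hmn, tB_all, etaEpsCubeFun, if_pos (by rw [cubeDeg_eq_card, hM]; rfl)]
  · obtain ⟨q0, hq0⟩ := hM
    have hKn : (mIdx x : ℕ) < n := by
      have h1 := mIdx_le (mem_mids.mp hq0)
      have := q0.isLt; omega
    set qf : Fin n := ⟨mIdx x, hKn⟩ with hqfdef
    have hqfmid : x qf = CubeF.mid := mIdx_self hKn
    have hqfM : qf ∈ mids x := mem_mids.mpr hqfmid
    have he0 : ((mids x).filter (fun r => r < qf)).card = 0 := by
      rw [Finset.card_eq_zero, Finset.filter_eq_empty_iff]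
      intro r hr hlt
      have h1 := mIdx_le (mem_mids.mp hr)
      have h2 : (r : ℕ) < (mIdx x : ℕ) := hlt
      omega
    have hterm_erase : ∀ q ∈ (mids x).erase qf,
        ((-1 : ℤ) ^ ((mids x).filter (fun r => r < q)).card) •
            (hCubeFun n (Function.update x q CubeF.one) -
              hCubeFun n (Function.update x q CubeF.zero)) =
          ∑ i ∈ aSet x, wTerm x i q := by
      intro q hq
      have hqM := Finset.mem_of_mem_erase hq
      have hqne := Finset.ne_of_mem_erase hq
      have hmid := mem_mids.mp hqM
      have hlt : (mIdx x : ℕ) < (q : ℕ) := by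
        have h1 := mIdx_le hmid
        have h2 : (q : ℕ) ≠ (mIdx x : ℕ) := by
          intro he; exact hqne (Fin.ext he)
        omega
      rw [hCubeFun_update_notfirst hmid hlt CubeF.one,
        hCubeFun_update_notfirst hmid hlt CubeF.zero, ← Finset.sum_sub_distrib,
        Finset.smul_sum]
      rfl
    have hterm_qf :
        ((-1 : ℤ) ^ ((mids x).filter (fun r => r < qf)).card) •
            (hCubeFun n (Function.update x qf CubeF.one) -
              hCubeFun n (Function.update x qf CubeF.zero)) =
          Finsupp.single (yB x qf) 1 + ∑ i ∈ aSet x, wTerm x i qf := by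
      rw [he0, pow_zero, one_smul, hCubeFun_update_first_one hqfmid rfl,
        hCubeFun_update_first_zero hqfmid rfl]
      have hW : ∑ i ∈ aSet x, wTerm x i qf =
          ∑ i ∈ aSet x,
            (Finsupp.single (Function.update (yB x i) qf CubeF.one) (1 : ℤ) -
              Finsupp.single (Function.update (yB x i) qf CubeF.zero) 1) := by
        refine Finset.sum_congr rfl (fun i hi => ?_)
        rw [wTerm, he0, pow_zero, one_smul]
      rw [hW, Finset.sum_sub_distrib]
      abel
    have hL2' : hCubeL n (cubeBdFun n x) =
        Finsupp.single (yB x qf) 1 + ∑ q ∈ mids x, ∑ i ∈ aSet x, wTerm x i q := by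
      rw [hL2, ← Finset.add_sum_erase _ _ hqfM, hterm_qf,
        Finset.sum_congr rfl hterm_erase,
        ← Finset.add_sum_erase _ (fun q => ∑ i ∈ aSet x, wTerm x i q) hqfM]
      abel
    rw [hL1, hL2', Finset.sum_comm (s := mids x) (t := aSet x), telescope,
      yB_eq_tB hqfmid, show ((qf : ℕ)) = ((mIdx x : ℕ)) from rfl,
      etaEpsCubeFun, if_neg (by
        rw [cubeDeg_eq_card]
        intro h
        rw [Finset.card_eq_zero] at h
        rw [h] at hqfM
        exact absurd hqfM (Finset.notMem_empty _)), sub_zero]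
    abel
end CartanSerre
namespace CartanSerre

open Finsupp CubeF Function

variable {n : ℕ}

noncomputable def etaEpsCubeL (n : ℕ) : CubeChain n →ₗ[ℤ] CubeChain n :=
  Finsupp.lift (CubeChain n) ℤ (CubeB n) (etaEpsCubeFun n)

lemma cube_homotopy (c : CubeChain n) :
    cubeBd n (hCubeL n c) + hCubeL n (cubeBd n c) = c - etaEpsCubeL n c := by
  have h : ((cubeBd n).comp (hCubeL n) + (hCubeL n).comp (cubeBd n) + etaEpsCubeL n) =
      (LinearMap.id : CubeChain n →ₗ[ℤ] CubeChain n) := by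
    apply Finsupp.lhom_ext
    intro x b
    simp only [LinearMap.add_apply, LinearMap.comp_apply, LinearMap.id_apply]
    rw [hCubeL, lift_single, map_smul, cubeBd, lift_single, map_smul, etaEpsCubeL, lift_single,
      ← smul_add, ← smul_add]
    rw [show Finsupp.lift (CubeChain n) ℤ (CubeB n) (hCubeFun n) = hCubeL n from rfl]
    rw [show Finsupp.lift (CubeChain n) ℤ (CubeB n) (cubeBdFun n) = cubeBd n from rfl]
    have hb := cube_homotopy_basis x
    have : cubeBd n (hCubeFun n x) + hCubeL n (cubeBdFun n x) + etaEpsCubeFun n x =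
        Finsupp.single x 1 := by rw [hb]; abel
    rw [this, Finsupp.smul_single, smul_eq_mul, mul_one]
  have := LinearMap.congr_fun h c
  simp only [LinearMap.add_apply, LinearMap.comp_apply, LinearMap.id_apply] at this
  exact eq_sub_of_add_eq this

lemma simp_homotopy (z : SimpChain n) :
    simpBd n (hSimpL n z) + hSimpL n (simpBd n z) = z - etaEpsSimpL n z := by
  have h : ((simpBd n).comp (hSimpL n) + (hSimpL n).comp (simpBd n) + etaEpsSimpL n) =
      (LinearMap.id : SimpChain n →ₗ[ℤ] SimpChain n) := by
    apply Finsupp.lhom_ext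
    intro s b
    simp only [LinearMap.add_apply, LinearMap.comp_apply, LinearMap.id_apply]
    rw [hSimpL, lift_single, map_smul, simpBd, lift_single, map_smul, etaEpsSimpL, lift_single,
      ← smul_add, ← smul_add]
    rw [show Finsupp.lift (SimpChain n) ℤ (SimpB n) (hSimpFun n) = hSimpL n from rfl]
    rw [show Finsupp.lift (SimpChain n) ℤ (SimpB n) (simpBdFun n) = simpBd n from rfl]
    have hb := simp_homotopy_basis s
    have : simpBd n (hSimpFun n s) + hSimpL n (simpBdFun n s) + etaEpsSimpFun n s =
        Finsupp.single s 1 := by rw [hb]; abel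
    rw [this, Finsupp.smul_single, smul_eq_mul, mul_one]
  have := LinearMap.congr_fun h z
  simp only [LinearMap.add_apply, LinearMap.comp_apply, LinearMap.id_apply] at this
  exact eq_sub_of_add_eq this

lemma etaEpsSimpL_homog_pos {z : SimpChain n} {m : ℕ} (hm : simpHomog n m z) (h1 : 1 ≤ m) :
    etaEpsSimpL n z = 0 := by
  rw [etaEpsSimpL, Finsupp.lift_apply]
  apply Finset.sum_eq_zero
  intro s hs
  have hcard := hm s hs
  simp only [etaEpsSimpFun]
  rw [if_neg (by omega), if_neg (by
    intro he; rw [he] at hcard; simp at hcard), smul_zero]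

lemma etaEpsSimpL_homog_zero {z : SimpChain n} (hm : simpHomog n 0 z) :
    etaEpsSimpL n z = (z.sum fun _ r => r) • Finsupp.single {0} 1 := by
  rw [etaEpsSimpL, Finsupp.lift_apply, Finsupp.sum, Finsupp.sum, Finset.sum_smul]
  apply Finset.sum_congr rfl
  intro s hs
  simp only [etaEpsSimpFun]
  rw [if_pos (hm s hs)]

lemma etaEpsCubeL_homog_pos {c : CubeChain n} {m : ℕ} (hm : cubeHomog n m c) (h1 : 1 ≤ m) :
    etaEpsCubeL n c = 0 := by
  rw [etaEpsCubeL, Finsupp.lift_apply]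
  apply Finset.sum_eq_zero
  intro x hx
  simp only [etaEpsCubeFun]
  rw [if_neg (by rw [hm x hx]; omega), smul_zero]

lemma etaEpsCubeL_homog_zero {c : CubeChain n} (hm : cubeHomog n 0 c) :
    etaEpsCubeL n c = (c.sum fun _ r => r) • Finsupp.single (fun _ => CubeF.zero) 1 := by
  rw [etaEpsCubeL, Finsupp.lift_apply, Finsupp.sum, Finsupp.sum, Finset.sum_smul]
  apply Finset.sum_congr rfl
  intro x hx
  simp only [etaEpsCubeFun]
  rw [if_pos (hm x hx)]

lemma hSimpL_homog {z : SimpChain n} {m : ℕ} (hm : simpHomog n m z) :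
    simpHomog n (m + 1) (hSimpL n z) := by
  intro s hs
  obtain ⟨t, ht, hst⟩ := support_lift_subset (hSimpFun n) z hs
  rw [hSimpFun] at hst
  by_cases h0 : (0 : Fin (n + 1)) ∈ t
  · rw [if_pos h0] at hst; simp at hst
  · rw [if_neg h0] at hst
    have := Finsupp.support_single_subset hst
    rw [Finset.mem_singleton] at this
    rw [this, Finset.card_insert_of_notMem h0, hm t ht]

lemma cubeDeg_yB {x : CubeB n} {i : Fin n} (hi : i ∈ aSet x) :
    cubeDeg (yB x i) = cubeDeg x + 1 := by
  rw [cubeDeg_eq_card, cubeDeg_eq_card, mids_yB hi,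
    Finset.card_insert_of_notMem (i_not_mem_mids (mem_aSet.mp hi).1)]

lemma hCubeL_homog {c : CubeChain n} {m : ℕ} (hm : cubeHomog n m c) :
    cubeHomog n (m + 1) (hCubeL n c) := by
  intro y hy
  obtain ⟨x, hx, hyx⟩ := support_lift_subset (hCubeFun n) c hy
  rw [hCubeFun] at hyx
  have := Finsupp.support_finset_sum hyx
  rcases Finset.mem_biUnion.mp this with ⟨i, hi, hyi⟩
  have := Finsupp.support_single_subset hyi
  rw [Finset.mem_singleton] at this
  rw [this, cubeDeg_yB hi, hm x hx]

lemma not_degen_of_deg_zero {x : CubeB n} (h : cubeDeg x = 0) : ¬ Degen x := by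
  rintro ⟨i, j, hij, hi, hj⟩
  have : j ∈ mids x := mem_mids.mpr hj
  rw [cubeDeg_eq_card, Finset.card_eq_zero] at h
  rw [h] at this
  exact absurd this (Finset.notMem_empty _)

lemma simpEps_csL_homog_zero {c : CubeChain n} (hc : cubeHomog n 0 c) :
    simpEps n (csL n c) = (c.sum fun _ r => r) := by
  rw [csL, Finsupp.lift_apply, map_finsuppSum]
  apply Finset.sum_congr rfl
  intro x hx
  have hdeg := hc x hx
  show simpEps n ((c x) • csFun n x) = c x
  rw [csFun_eq_of_not_degen (not_degen_of_deg_zero hdeg), map_smul, simpEps, lift_single,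
    one_smul, if_pos (by rw [csSet_card (not_degen_of_deg_zero hdeg), hdeg]), smul_eq_mul,
    mul_one]

lemma simpEps_simpBdFun_two {s : SimpB n} (hcard : s.card = 2) :
    simpEps n (simpBdFun n s) = 0 := by
  obtain ⟨a, b, hab, hs⟩ := Finset.card_eq_two.mp hcard
  have key : ∀ a b : Fin (n + 1), a < b →
      simpEps n (simpBdFun n ({a, b} : Finset (Fin (n + 1)))) = 0 := by
    intro a b hab'
    have hne : a ≠ b := ne_of_lt hab'
    have hc2 : 2 ≤ ({a, b} : Finset (Fin (n + 1))).card := by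
      rw [Finset.card_insert_of_notMem (by simpa using hne), Finset.card_singleton]
    rw [simpBdFun, if_pos hc2, map_sum, Finset.sum_pair hne]
    have hfa : (({a, b} : Finset (Fin (n + 1))).filter (fun w => w < a)).card = 0 := by
      rw [Finset.card_eq_zero, Finset.filter_eq_empty_iff]
      intro w hw
      rcases Finset.mem_insert.mp hw with h | h
      · subst h; exact lt_irrefl _
      · rw [Finset.mem_singleton] at h; subst h; exact not_lt_of_gt hab'
    have hfb : (({a, b} : Finset (Fin (n + 1))).filter (fun w => w < b)).card = 1 := by
      rw [Finset.card_eq_one]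
      refine ⟨a, ?_⟩
      ext w
      simp only [Finset.mem_filter, Finset.mem_insert, Finset.mem_singleton]
      constructor
      · rintro ⟨h | h, hlt⟩
        · exact h
        · subst h; exact absurd hlt (lt_irrefl _)
      · intro h; subst h; exact ⟨Or.inl rfl, hab'⟩
    have hea : simpEps n (Finsupp.single (({a, b} : Finset (Fin (n + 1))).erase a) (1 : ℤ)) = 1 := by
      rw [simpEps, lift_single, one_smul, if_pos]
      rw [Finset.erase_insert (by simpa using hne), Finset.card_singleton]
    have heb : simpEps n (Finsupp.single (({a, b} : Finset (Fin (n + 1))).erase b) (1 : ℤ)) = 1 := by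
      rw [simpEps, lift_single, one_smul, if_pos]
      rw [Finset.pair_comm, Finset.erase_insert (by simpa using hne.symm), Finset.card_singleton]
    rw [map_smul, map_smul, hea, heb, hfa, hfb]
    simp
  rcases lt_or_gt_of_ne hab with h | h
  · rw [hs]; exact key a b h
  · rw [hs, Finset.pair_comm]; exact key b a h

lemma simpEps_simpBd_homog_one {b : SimpChain n} (hb : simpHomog n 1 b) :
    simpEps n (simpBd n b) = 0 := by
  rw [simpBd, Finsupp.lift_apply, map_finsuppSum]
  apply Finset.sum_eq_zero
  intro s hs
  show simpEps n ((b s) • simpBdFun n s) = 0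
  rw [map_smul, simpEps_simpBdFun_two (hb s hs), smul_zero]

lemma csSet_zeroB : csSet (fun _ => CubeF.zero : CubeB n) = {0} := by
  have hmids : mids (fun _ => CubeF.zero : CubeB n) = ∅ := by
    rw [Finset.eq_empty_iff_forall_notMem]
    intro i hi
    exact CubeF.noConfusion (mem_mids.mp hi)
  have hp : pIdx (fun _ => CubeF.zero : CubeB n) = 0 := by
    apply pIdx_eq
    · intro j hj; simp at hj
    · intro h; rfl
  rw [csSet_eq, hmids, hp]
  rfl

lemma cubeBdFun_zeroB : cubeBdFun n (fun _ => CubeF.zero) = 0 := by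
  rw [cubeBdFun, show (Finset.univ.filter fun i : Fin n =>
    (fun _ => CubeF.zero : CubeB n) i = CubeF.mid) = (∅ : Finset (Fin n)) from ?_]
  · exact Finset.sum_empty
  · rw [Finset.eq_empty_iff_forall_notMem]
    intro i hi
    exact CubeF.noConfusion (Finset.mem_filter.mp hi).2

lemma cubeDeg_zeroB : cubeDeg (fun _ => CubeF.zero : CubeB n) = 0 := by
  rw [cubeDeg_eq_card, Finset.card_eq_zero, Finset.eq_empty_iff_forall_notMem]
  intro i hi
  exact CubeF.noConfusion (mem_mids.mp hi)

end CartanSerre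

open CartanSerre in
/-- The Cartan–Serre map `CS : C(□^n) → C(Δ^n)` is a quasi-isomorphism:
it is a degree-preserving chain map and the induced map on homology is an isomorphism in
every degree `m` (surjective and injective modulo boundaries). -/
theorem cartanSerre_quasi_isomorphism (n : ℕ) :
    (∀ c : CubeChain n, simpBd n (csL n c) = csL n (cubeBd n c)) ∧
    (∀ (m : ℕ) (c : CubeChain n), cubeHomog n m c → simpHomog n m (csL n c)) ∧
    ∀ m : ℕ,
      (∀ z : SimpChain n, simpHomog n m z → simpBd n z = 0 →
        ∃ c : CubeChain n, cubeHomog n m c ∧ cubeBd n c = 0 ∧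
          ∃ b : SimpChain n, simpHomog n (m + 1) b ∧ csL n c - z = simpBd n b) ∧
      (∀ c : CubeChain n, cubeHomog n m c → cubeBd n c = 0 →
        (∃ b : SimpChain n, simpHomog n (m + 1) b ∧ csL n c = simpBd n b) →
        ∃ a : CubeChain n, cubeHomog n (m + 1) a ∧ c = cubeBd n a) := by
  refine ⟨csL_chainmap, fun m c h => csL_homog m c h, fun m => ⟨?_, ?_⟩⟩
  · -- surjectivity on homology
    intro z hz hbd
    by_cases hm : m = 0
    · subst hm
      refine ⟨(z.sum fun _ r => r) • Finsupp.single (fun _ => CubeF.zero) 1, ?_, ?_,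
        -(hSimpL n z), ?_, ?_⟩
      · intro x hx
        have h1 := Finsupp.support_smul hx
        have h2 := Finsupp.support_single_subset h1
        rw [Finset.mem_singleton] at h2
        rw [h2]
        exact cubeDeg_zeroB
      · rw [map_smul, cubeBd, lift_single, one_smul, cubeBdFun_zeroB, smul_zero]
      · intro s hs
        rw [Finsupp.support_neg] at hs
        exact hSimpL_homog hz s hs
      · have hh := simp_homotopy z
        rw [hbd, map_zero, add_zero, etaEpsSimpL_homog_zero hz] at hh
        rw [map_neg, hh, map_smul, csL, lift_single, one_smul,
          csFun_eq_of_not_degen (not_degen_of_deg_zero cubeDeg_zeroB), csSet_zeroB]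
        abel
    · refine ⟨0, ?_, map_zero _, -(hSimpL n z), ?_, ?_⟩
      · intro x hx; simp at hx
      · intro s hs
        rw [Finsupp.support_neg] at hs
        exact hSimpL_homog hz s hs
      · have hh := simp_homotopy z
        rw [hbd, map_zero, add_zero,
          etaEpsSimpL_homog_pos hz (by omega), sub_zero] at hh
        rw [map_zero, zero_sub, map_neg, hh]
  · -- injectivity on homology
    intro c hc hbd hex
    by_cases hm : m = 0
    · subst hm
      obtain ⟨b, hb, hcsb⟩ := hex
      have ht : (c.sum fun _ r => r) = 0 := by
        have h1 := simpEps_csL_homog_zero hc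
        rw [hcsb, simpEps_simpBd_homog_one hb] at h1
        exact h1.symm
      have hh := cube_homotopy c
      rw [hbd, map_zero, add_zero, etaEpsCubeL_homog_zero hc, ht, zero_smul, sub_zero] at hh
      exact ⟨hCubeL n c, hCubeL_homog hc, hh.symm⟩
    · have hh := cube_homotopy c
      rw [hbd, map_zero, add_zero, etaEpsCubeL_homog_pos hc (by omega), sub_zero] at hh
      exact ⟨hCubeL n c, hCubeL_homog hc, hh.symm⟩
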